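/- arXiv:0707.3937 — 5 statements merged into one kernel-verified Lean document; each statement's English description precedes it below -/
import Mathlib

section
/- Let W be a (ungraded, for simplicity) module over a commutative ring K containing Q. Equip the tensor algebra T(W) with its standard Hopf algebra structure where every element of W is primitive (the shuffle coproduct Δ). Define the modified shuffle operator s := μ ∘ Δ : T(W) → T(W), where μ is multiplication. Then for any elements g_1, ..., g_p of the free Lie algebra L(W) ⊆ T(W) (i.e., primitive elements), one has s(g_1 ⋯ g_p) ≡ 2^p · g_1 ⋯ g_p modulo the submodule F_{p−1} spanned by products of at most p−1 elements of L(W). -/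
open scoped TensorProduct

/-- The shuffle coproduct on the tensor algebra: the algebra map determined by
declaring every element of `W` primitive. -/
noncomputable def comul (K W : Type*) [CommRing K] [AddCommGroup W] [Module K W] :
    TensorAlgebra K W →ₐ[K] TensorAlgebra K W ⊗[K] TensorAlgebra K W :=
  TensorAlgebra.lift K
    ((Algebra.TensorProduct.includeLeft.toLinearMap ∘ₗ TensorAlgebra.ι K) +
     (Algebra.TensorProduct.includeRight.toLinearMap ∘ₗ TensorAlgebra.ι K))

/-- The modified shuffle operator `s = μ ∘ Δ`. -/
noncomputable def shuffleOp (K W : Type*) [CommRing K] [AddCommGroup W] [Module K W] :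
    TensorAlgebra K W →ₗ[K] TensorAlgebra K W :=
  LinearMap.mul' K (TensorAlgebra K W) ∘ₗ (comul K W).toLinearMap

/-- The filtration of the tensor algebra by products of at most `q` primitive elements. -/
noncomputable def Filt (K W : Type*) [CommRing K] [AddCommGroup W] [Module K W] (q : ℕ) :
    Submodule K (TensorAlgebra K W) :=
  Submodule.span K {x | ∃ l : List (TensorAlgebra K W), l.length ≤ q ∧
    (∀ a ∈ l, comul K W a = a ⊗ₜ 1 + 1 ⊗ₜ a) ∧ x = l.prod}

section Aux

variable {K W : Type*} [CommRing K] [AddCommGroup W] [Module K W]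

theorem filt_mono {q q' : ℕ} (h : q ≤ q') : Filt K W q ≤ Filt K W q' := by
  apply Submodule.span_mono
  rintro x ⟨l, hl, hp, rfl⟩
  exact ⟨l, hl.trans h, hp, rfl⟩

theorem prod_mem_filt {q : ℕ} (l : List (TensorAlgebra K W))
    (hp : ∀ a ∈ l, comul K W a = a ⊗ₜ 1 + 1 ⊗ₜ a) (hq : l.length ≤ q) :
    l.prod ∈ Filt K W q :=
  Submodule.subset_span ⟨l, hq, hp, rfl⟩

theorem mul_prim_mem {x : TensorAlgebra K W}
    (hx : comul K W x = x ⊗ₜ 1 + 1 ⊗ₜ x) {q : ℕ} {v : TensorAlgebra K W}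
    (hv : v ∈ Filt K W q) : x * v ∈ Filt K W (q + 1) := by
  induction hv using Submodule.span_induction with
  | mem v hv =>
    obtain ⟨l, hl, hp, rfl⟩ := hv
    refine Submodule.subset_span ⟨x :: l, by simpa using Nat.succ_le_succ hl, ?_,
      (List.prod_cons).symm⟩
    intro a ha
    rcases List.mem_cons.1 ha with rfl | ha
    · exact hx
    · exact hp a ha
  | zero => simp
  | add u v _ _ hu hv => rw [mul_add]; exact add_mem hu hv
  | smul c u _ hu => rw [mul_smul_comm]; exact Submodule.smul_mem _ _ hu

theorem prim_comm {a b : TensorAlgebra K W}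
    (ha : comul K W a = a ⊗ₜ 1 + 1 ⊗ₜ a) (hb : comul K W b = b ⊗ₜ 1 + 1 ⊗ₜ b) :
    comul K W (a * b - b * a) = (a * b - b * a) ⊗ₜ 1 + 1 ⊗ₜ (a * b - b * a) := by
  simp only [map_sub, map_mul, ha, hb, add_mul, mul_add,
    Algebra.TensorProduct.tmul_mul_tmul, one_mul, mul_one,
    TensorProduct.sub_tmul, TensorProduct.tmul_sub]
  abel

theorem perm_prod_sub_mem {l₁ l₂ : List (TensorAlgebra K W)} (h : l₁.Perm l₂) :
    (∀ a ∈ l₁, comul K W a = a ⊗ₜ 1 + 1 ⊗ₜ a) →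
    l₂.prod - l₁.prod ∈ Filt K W (l₁.length - 1) := by
  induction h with
  | nil => intro _; simp
  | @cons x l₁ l₂ h ih =>
    intro hp
    have hx := hp x List.mem_cons_self
    have h' := ih (fun a ha => hp a (List.mem_cons_of_mem _ ha))
    rw [List.prod_cons, List.prod_cons, ← mul_sub]
    cases l₁ with
    | nil =>
      have hnil : l₂ = [] := h.symm.eq_nil
      subst hnil; simp
    | cons b t =>
      have h2 := mul_prim_mem hx h'
      simpa [List.length_cons, Nat.add_sub_cancel] using h2
  | swap x y l =>
    intro hp
    have hx := hp x (by simp)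
    have hy := hp y (by simp)
    have hdiff : (x :: y :: l).prod - (y :: x :: l).prod = ((x * y - y * x) :: l).prod := by
      simp [List.prod_cons, sub_mul, mul_assoc]
    rw [hdiff]
    refine prod_mem_filt _ ?_ (by simp)
    intro a ha
    rcases List.mem_cons.1 ha with rfl | ha
    · exact prim_comm hx hy
    · exact hp a (by simp [ha])
  | @trans la lb lc h₁ h₂ ih₁ ih₂ =>
    intro hp
    have hpb : ∀ a ∈ lb, comul K W a = a ⊗ₜ 1 + 1 ⊗ₜ a :=
      fun a ha => hp a (h₁.mem_iff.2 ha)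
    have h1 := ih₁ hp
    have h2 := ih₂ hpb
    rw [← h₁.length_eq] at h2
    have heq : lc.prod - la.prod = (lc.prod - lb.prod) + (lb.prod - la.prod) := by abel
    rw [heq]
    exact add_mem h2 h1

/-- All ways of splitting a list into a pair of complementary (order-preserving) sublists. -/
def splits {α : Type*} : List α → List (List α × List α)
  | [] => [([], [])]
  | a :: t => ((splits t).map fun p => (a :: p.1, p.2)) ++
      ((splits t).map fun p => (p.1, a :: p.2))

theorem splits_length {α : Type*} (l : List α) : (splits l).length = 2 ^ l.length := by
  induction l with
  | nil => simp [splits]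
  | cons a t ih => simp [splits, ih, pow_succ]; ring

theorem splits_perm {α : Type*} (l : List α) :
    ∀ p ∈ splits l, (p.1 ++ p.2).Perm l := by
  induction l with
  | nil => intro p hp; simp [splits] at hp; simp [hp]
  | cons a t ih =>
    intro p hp
    simp only [splits, List.mem_append, List.mem_map] at hp
    rcases hp with ⟨q, hq, rfl⟩ | ⟨q, hq, rfl⟩
    · simpa using (ih q hq).cons a
    · exact (List.perm_middle).trans ((ih q hq).cons a)

theorem mul_list_sum {R : Type*} [NonUnitalNonAssocSemiring R] (a : R) (l : List R) :
    a * l.sum = (l.map (a * ·)).sum := by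
  induction l with
  | nil => simp
  | cons b t ih => simp [mul_add, ih]

theorem comul_prod (l : List (TensorAlgebra K W))
    (hl : ∀ a ∈ l, comul K W a = a ⊗ₜ 1 + 1 ⊗ₜ a) :
    comul K W l.prod = ((splits l).map fun p => p.1.prod ⊗ₜ[K] p.2.prod).sum := by
  induction l with
  | nil => simp [splits, Algebra.TensorProduct.one_def]
  | cons a t ih =>
    have ha := hl a List.mem_cons_self
    have ih' := ih (fun b hb => hl b (List.mem_cons_of_mem _ hb))
    rw [List.prod_cons, map_mul, ha, ih']
    simp only [splits, List.map_append, List.map_map, List.sum_append]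
    rw [add_mul, mul_list_sum, mul_list_sum, List.map_map, List.map_map]
    congr 1 <;> apply congrArg <;> apply List.map_congr_left <;> intro p _ <;>
      simp [Algebra.TensorProduct.tmul_mul_tmul, List.prod_cons]

theorem sum_map_sub {α M : Type*} [AddCommGroup M] (l : List α) (f : α → M) (c : M) :
    (l.map fun p => f p - c).sum = (l.map f).sum - l.length • c := by
  induction l with
  | nil => simp
  | cons b t ih => simp only [List.map_cons, List.sum_cons, ih, List.length_cons, succ_nsmul]; abel

end Aux

/-- for primitives g₁,…,g_p one has
`s(g₁ ⋯ g_p) ≡ 2^p · g₁ ⋯ g_p` modulo `F_{p-1}`. -/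
theorem stmt2 {K W : Type*} [CommRing K] [Algebra ℚ K] [AddCommGroup W] [Module K W]
    (l : List (TensorAlgebra K W))
    (hl : ∀ a ∈ l, comul K W a = a ⊗ₜ 1 + 1 ⊗ₜ a) :
    shuffleOp K W l.prod - (2 : K) ^ l.length • l.prod ∈ Filt K W (l.length - 1) := by
  have hμ : shuffleOp K W l.prod = ((splits l).map fun p => p.1.prod * p.2.prod).sum := by
    rw [shuffleOp, LinearMap.comp_apply, AlgHom.toLinearMap_apply, comul_prod l hl,
      map_list_sum, List.map_map]
    simp [Function.comp_def, LinearMap.mul'_apply]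
  have hsmul : (2 : K) ^ l.length • l.prod = (2 ^ l.length : ℕ) • l.prod := by
    rw [show ((2:K) ^ l.length) = ((2 ^ l.length : ℕ) : K) by push_cast; ring,
      Nat.cast_smul_eq_nsmul]
  rw [hμ, hsmul, ← splits_length l, ← sum_map_sub]
  refine list_sum_mem ?_
  intro x hx
  simp only [List.mem_map] at hx
  obtain ⟨p, hp, rfl⟩ := hx
  have hmem := perm_prod_sub_mem (splits_perm l p hp).symm hl
  rwa [List.prod_append] at hmem
end

section
/- Let W be a module over a commutative ring K containing Q, and let s_n : W^{⊗n} → W^{⊗n} be the restriction of the modified shuffle operator s = μΔ to the degree-n component of the tensor algebra. Then the polynomial ν_n(X) = ∏_{i=0}^{n} (X − 2^i) annihilates s_n, i.e. ∏_{i=0}^{n} (s_n − 2^i · id) = 0. -/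
open scoped TensorProduct

namespace SA
open TensorProduct LinearMap
variable (K W : Type*) [CommRing K] [AddCommGroup W] [Module K W]

local notation "T" => TensorAlgebra K W

lemma comul_ι (w : W) :
    comul K W (TensorAlgebra.ι K w) =
      TensorAlgebra.ι K w ⊗ₜ[K] 1 + 1 ⊗ₜ[K] TensorAlgebra.ι K w := by
  simp [comul, TensorAlgebra.lift_ι_apply]

/-- counit -/
noncomputable def cnt : TensorAlgebra K W →ₐ[K] K := TensorAlgebra.algebraMapInv

lemma cnt_ι (w : W) : cnt K W (TensorAlgebra.ι K w) = 0 := by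
  simp [cnt, TensorAlgebra.algebraMapInv, TensorAlgebra.lift_ι_apply]

/-- unit ∘ counit as algebra hom -/
noncomputable def uA : TensorAlgebra K W →ₐ[K] TensorAlgebra K W :=
  (Algebra.ofId K T).comp (cnt K W)

noncomputable def u : Module.End K (TensorAlgebra K W) := (uA K W).toLinearMap

lemma u_apply (x : T) : u K W x = algebraMap K T (cnt K W x) := rfl

noncomputable def d : Module.End K (TensorAlgebra K W) := LinearMap.id - u K W

/-- convolution -/
noncomputable def conv (f g : Module.End K (TensorAlgebra K W)) :
    Module.End K (TensorAlgebra K W) :=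
  LinearMap.mul' K T ∘ₗ TensorProduct.map f g ∘ₗ (comul K W).toLinearMap

lemma conv_apply (f g : Module.End K (TensorAlgebra K W)) (x : T) :
    conv K W f g x = LinearMap.mul' K T (TensorProduct.map f g (comul K W x)) := rfl

lemma hcomm_left : ∀ (a b : T), Commute (uA K W a) ((AlgHom.id K T) b) := fun a b => by
  simpa [uA, Algebra.ofId_apply, Commute, SemiconjBy] using (Algebra.commutes (cnt K W a) b)

lemma hcomm_right : ∀ (a b : T), Commute ((AlgHom.id K T) a) (uA K W b) := fun a b => by
  simpa [uA, Algebra.ofId_apply, Commute, SemiconjBy] using (Algebra.commutes (cnt K W b) a).symm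

lemma counit_left (x : T) :
    LinearMap.mul' K T (TensorProduct.map (u K W) LinearMap.id (comul K W x)) = x := by
  have h1 : (Algebra.TensorProduct.lift (uA K W) (AlgHom.id K T) (hcomm_left K W)).comp
      (comul K W) = AlgHom.id K T := by
    apply TensorAlgebra.hom_ext
    apply LinearMap.ext; intro w
    simp [comul_ι, Algebra.TensorProduct.lift_tmul, uA, Algebra.ofId_apply, cnt_ι]
  have h3 : (Algebra.TensorProduct.lift (uA K W) (AlgHom.id K T)
      (hcomm_left K W)).toLinearMap
      = LinearMap.mul' K T ∘ₗ TensorProduct.map (u K W) LinearMap.id := by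
    apply TensorProduct.ext'
    intro a b
    simp [Algebra.TensorProduct.lift_tmul, u]
  have h2 := congrArg (fun (f : TensorAlgebra K W →ₐ[K] TensorAlgebra K W) => f x) h1
  simp only [AlgHom.comp_apply, AlgHom.id_apply] at h2
  calc LinearMap.mul' K T (TensorProduct.map (u K W) LinearMap.id (comul K W x))
      = (Algebra.TensorProduct.lift (uA K W) (AlgHom.id K T) (hcomm_left K W)).toLinearMap
          (comul K W x) := by rw [h3]; rfl
    _ = x := h2

lemma counit_right (x : T) :
    LinearMap.mul' K T (TensorProduct.map LinearMap.id (u K W) (comul K W x)) = x := by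
  have h1 : (Algebra.TensorProduct.lift (AlgHom.id K T) (uA K W) (hcomm_right K W)).comp
      (comul K W) = AlgHom.id K T := by
    apply TensorAlgebra.hom_ext
    apply LinearMap.ext; intro w
    simp [comul_ι, Algebra.TensorProduct.lift_tmul, uA, Algebra.ofId_apply, cnt_ι]
  have h3 : (Algebra.TensorProduct.lift (AlgHom.id K T) (uA K W)
      (hcomm_right K W)).toLinearMap
      = LinearMap.mul' K T ∘ₗ TensorProduct.map LinearMap.id (u K W) := by
    apply TensorProduct.ext'
    intro a b
    simp [Algebra.TensorProduct.lift_tmul, u]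
  have h2 := congrArg (fun (f : TensorAlgebra K W →ₐ[K] TensorAlgebra K W) => f x) h1
  simp only [AlgHom.comp_apply, AlgHom.id_apply] at h2
  calc LinearMap.mul' K T (TensorProduct.map LinearMap.id (u K W) (comul K W x))
      = (Algebra.TensorProduct.lift (AlgHom.id K T) (uA K W) (hcomm_right K W)).toLinearMap
          (comul K W x) := by rw [h3]; rfl
    _ = x := h2

lemma conv_u_left (f : Module.End K (TensorAlgebra K W)) : conv K W (u K W) f = f := by
  have key : LinearMap.mul' K T ∘ₗ TensorProduct.map (u K W) f
      = f ∘ₗ (LinearMap.mul' K T ∘ₗ TensorProduct.map (u K W) LinearMap.id) := by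
    apply TensorProduct.ext'
    intro a b
    simp only [LinearMap.comp_apply, TensorProduct.map_tmul, LinearMap.mul'_apply,
      LinearMap.id_apply, u_apply]
    rw [← Algebra.smul_def, ← Algebra.smul_def, map_smul]
  apply LinearMap.ext; intro x
  have hk := LinearMap.congr_fun key (comul K W x)
  simp only [LinearMap.comp_apply] at hk
  calc conv K W (u K W) f x
      = LinearMap.mul' K T (TensorProduct.map (u K W) f (comul K W x)) := rfl
    _ = f (LinearMap.mul' K T (TensorProduct.map (u K W) LinearMap.id (comul K W x))) := hk
    _ = f x := by rw [counit_left]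

lemma conv_u_right (f : Module.End K (TensorAlgebra K W)) : conv K W f (u K W) = f := by
  have key : LinearMap.mul' K T ∘ₗ TensorProduct.map f (u K W)
      = f ∘ₗ (LinearMap.mul' K T ∘ₗ TensorProduct.map LinearMap.id (u K W)) := by
    apply TensorProduct.ext'
    intro a b
    simp only [LinearMap.comp_apply, TensorProduct.map_tmul, LinearMap.mul'_apply,
      LinearMap.id_apply, u_apply]
    rw [← Algebra.commutes, ← Algebra.commutes, ← Algebra.smul_def, ← Algebra.smul_def, map_smul]
  apply LinearMap.ext; intro x
  have hk := LinearMap.congr_fun key (comul K W x)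
  simp only [LinearMap.comp_apply] at hk
  calc conv K W f (u K W) x
      = LinearMap.mul' K T (TensorProduct.map f (u K W) (comul K W x)) := rfl
    _ = f (LinearMap.mul' K T (TensorProduct.map LinearMap.id (u K W) (comul K W x))) := hk
    _ = f x := by rw [counit_right]


lemma shuffle_apply (x : T) :
    shuffleOp K W x = LinearMap.mul' K T (comul K W x) := rfl

/- associativity of multiplication, in tensor form -/
lemma assoc_mul :
    LinearMap.mul' K T ∘ₗ TensorProduct.map (LinearMap.mul' K T) LinearMap.id
      = (LinearMap.mul' K T ∘ₗ TensorProduct.map LinearMap.id (LinearMap.mul' K T)) ∘ₗ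
          (TensorProduct.assoc K T T T).toLinearMap := by
  apply TensorProduct.ext_threefold
  intro a b c
  simp [mul_assoc]

lemma assoc_nat (f g h : Module.End K (TensorAlgebra K W)) :
    (TensorProduct.assoc K T T T).toLinearMap ∘ₗ TensorProduct.map (TensorProduct.map f g) h
      = TensorProduct.map f (TensorProduct.map g h) ∘ₗ
          (TensorProduct.assoc K T T T).toLinearMap := by
  apply TensorProduct.ext_threefold
  intro a b c
  simp

lemma coassocA :
    ((Algebra.TensorProduct.assoc K K K T T T : (T ⊗[K] T) ⊗[K] T ≃ₐ[K] T ⊗[K] (T ⊗[K] T))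
        : (T ⊗[K] T) ⊗[K] T →ₐ[K] T ⊗[K] (T ⊗[K] T)).comp
      ((Algebra.TensorProduct.map (comul K W) (AlgHom.id K T)).comp (comul K W))
    = (Algebra.TensorProduct.map (AlgHom.id K T) (comul K W)).comp (comul K W) := by
  apply TensorAlgebra.hom_ext
  apply LinearMap.ext; intro w
  simp only [LinearMap.comp_apply, AlgHom.toLinearMap_apply, AlgHom.comp_apply, comul_ι,
    map_add, Algebra.TensorProduct.map_tmul, AlgHom.id_apply, map_one, AlgHom.coe_coe,
    Algebra.TensorProduct.assoc_tmul, TensorProduct.add_tmul, TensorProduct.tmul_add,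
    Algebra.TensorProduct.one_def]
  abel

lemma coassocL (x : T) :
    (TensorProduct.assoc K T T T)
      (TensorProduct.map (comul K W).toLinearMap LinearMap.id (comul K W x))
    = TensorProduct.map LinearMap.id (comul K W).toLinearMap (comul K W x) := by
  have h4 := congrArg (fun (f : T →ₐ[K] T ⊗[K] (T ⊗[K] T)) => f x) (coassocA K W)
  simp only [AlgHom.comp_apply] at h4
  exact h4

lemma conv_assoc (f g h : Module.End K (TensorAlgebra K W)) :
    conv K W (conv K W f g) h = conv K W f (conv K W g h) := by
  have e1 : TensorProduct.map (conv K W f g) h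
      = (TensorProduct.map (LinearMap.mul' K T) LinearMap.id) ∘ₗ
        (TensorProduct.map (TensorProduct.map f g) h) ∘ₗ
        (TensorProduct.map (comul K W).toLinearMap LinearMap.id) := by
    apply TensorProduct.ext'
    intro a b
    simp [conv]
  have e2 : TensorProduct.map f (conv K W g h)
      = (TensorProduct.map LinearMap.id (LinearMap.mul' K T)) ∘ₗ
        (TensorProduct.map f (TensorProduct.map g h)) ∘ₗ
        (TensorProduct.map LinearMap.id (comul K W).toLinearMap) := by
    apply TensorProduct.ext'
    intro a b
    simp [conv]
  apply LinearMap.ext; intro x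
  have am := LinearMap.congr_fun (assoc_mul K W)
    ((TensorProduct.map (TensorProduct.map f g) h)
      (TensorProduct.map (comul K W).toLinearMap LinearMap.id (comul K W x)))
  have an := LinearMap.congr_fun (assoc_nat K W f g h)
    (TensorProduct.map (comul K W).toLinearMap LinearMap.id (comul K W x))
  simp only [LinearMap.comp_apply, LinearEquiv.coe_coe] at am an
  calc conv K W (conv K W f g) h x
      = LinearMap.mul' K T (TensorProduct.map (conv K W f g) h (comul K W x)) := rfl
    _ = LinearMap.mul' K T ((TensorProduct.map (LinearMap.mul' K T) LinearMap.id)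
        ((TensorProduct.map (TensorProduct.map f g) h)
          (TensorProduct.map (comul K W).toLinearMap LinearMap.id (comul K W x)))) := by
          rw [e1]; rfl
    _ = LinearMap.mul' K T ((TensorProduct.map LinearMap.id (LinearMap.mul' K T))
        ((TensorProduct.assoc K T T T)
          ((TensorProduct.map (TensorProduct.map f g) h)
            (TensorProduct.map (comul K W).toLinearMap LinearMap.id (comul K W x))))) := am
    _ = LinearMap.mul' K T ((TensorProduct.map LinearMap.id (LinearMap.mul' K T))
        ((TensorProduct.map f (TensorProduct.map g h))
          ((TensorProduct.assoc K T T T)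
            (TensorProduct.map (comul K W).toLinearMap LinearMap.id (comul K W x))))) := by
          rw [an]
    _ = LinearMap.mul' K T ((TensorProduct.map LinearMap.id (LinearMap.mul' K T))
        ((TensorProduct.map f (TensorProduct.map g h))
          (TensorProduct.map LinearMap.id (comul K W).toLinearMap (comul K W x)))) := by
          rw [coassocL]
    _ = LinearMap.mul' K T (TensorProduct.map f (conv K W g h) (comul K W x)) := by
          rw [e2]; rfl
    _ = conv K W f (conv K W g h) x := rfl


/-- Δ∘μ = μ₂∘(Δ⊗Δ) -/
lemma comul_mul :
    (comul K W).toLinearMap ∘ₗ LinearMap.mul' K T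
      = LinearMap.mul' K (T ⊗[K] T) ∘ₗ
          TensorProduct.map (comul K W).toLinearMap (comul K W).toLinearMap := by
  apply TensorProduct.ext'
  intro a b
  simp [map_mul]

/-- multiplication of T⊗T decomposed -/
lemma mul2_eq :
    LinearMap.mul' K (T ⊗[K] T)
      = TensorProduct.map (LinearMap.mul' K T) (LinearMap.mul' K T) ∘ₗ
          (TensorProduct.tensorTensorTensorComm K T T T T).toLinearMap := by
  apply TensorProduct.ext_fourfold'
  intro a b c d
  simp [Algebra.TensorProduct.tmul_mul_tmul]

/-- cocommutativity-based symmetry of the iterated coproduct -/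
lemma cocomm4A :
    ((Algebra.TensorProduct.tensorTensorTensorComm K K K K T T T T :
        (T ⊗[K] T) ⊗[K] (T ⊗[K] T) ≃ₐ[K] (T ⊗[K] T) ⊗[K] (T ⊗[K] T))
        : (T ⊗[K] T) ⊗[K] (T ⊗[K] T) →ₐ[K] (T ⊗[K] T) ⊗[K] (T ⊗[K] T)).comp
      ((Algebra.TensorProduct.map (comul K W) (comul K W)).comp (comul K W))
    = (Algebra.TensorProduct.map (comul K W) (comul K W)).comp (comul K W) := by
  apply TensorAlgebra.hom_ext
  apply LinearMap.ext; intro w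
  simp only [LinearMap.comp_apply, AlgHom.toLinearMap_apply, AlgHom.comp_apply, comul_ι,
    map_add, Algebra.TensorProduct.map_tmul, map_one, AlgHom.coe_coe,
    TensorProduct.add_tmul, TensorProduct.tmul_add, Algebra.TensorProduct.one_def,
    AlgEquiv.coe_algHom, Algebra.TensorProduct.tensorTensorTensorComm_tmul]
  abel

lemma cocomm4L (x : T) :
    (TensorProduct.tensorTensorTensorComm K T T T T)
      (TensorProduct.map (comul K W).toLinearMap (comul K W).toLinearMap (comul K W x))
    = TensorProduct.map (comul K W).toLinearMap (comul K W).toLinearMap (comul K W x) := by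
  have h4 := congrArg (fun (f : T →ₐ[K] (T ⊗[K] T) ⊗[K] (T ⊗[K] T)) => f x) (cocomm4A K W)
  simp only [AlgHom.comp_apply] at h4
  exact h4

/-- s is a morphism of coalgebras -/
lemma comul_shuffle (x : T) :
    comul K W (shuffleOp K W x)
      = TensorProduct.map (shuffleOp K W) (shuffleOp K W) (comul K W x) := by
  have e6 : TensorProduct.map (shuffleOp K W) (shuffleOp K W)
      = TensorProduct.map (LinearMap.mul' K T) (LinearMap.mul' K T) ∘ₗ
          TensorProduct.map (comul K W).toLinearMap (comul K W).toLinearMap := by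
    apply TensorProduct.ext'
    intro a b
    simp [shuffle_apply]
  have h1 := LinearMap.congr_fun (comul_mul K W) (comul K W x)
  simp only [LinearMap.comp_apply, AlgHom.toLinearMap_apply] at h1
  have h2 := LinearMap.congr_fun (mul2_eq K W)
    (TensorProduct.map (comul K W).toLinearMap (comul K W).toLinearMap (comul K W x))
  simp only [LinearMap.comp_apply, LinearEquiv.coe_coe] at h2
  calc comul K W (shuffleOp K W x)
      = LinearMap.mul' K (T ⊗[K] T)
          (TensorProduct.map (comul K W).toLinearMap (comul K W).toLinearMap (comul K W x)) := h1
    _ = TensorProduct.map (LinearMap.mul' K T) (LinearMap.mul' K T)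
          ((TensorProduct.tensorTensorTensorComm K T T T T)
            (TensorProduct.map (comul K W).toLinearMap (comul K W).toLinearMap
              (comul K W x))) := h2
    _ = TensorProduct.map (LinearMap.mul' K T) (LinearMap.mul' K T)
          (TensorProduct.map (comul K W).toLinearMap (comul K W).toLinearMap (comul K W x)) := by
        rw [cocomm4L]
    _ = TensorProduct.map (shuffleOp K W) (shuffleOp K W) (comul K W x) := by
        rw [e6]; rfl

/-- convolution is compatible with right composition by s -/
lemma conv_comp_s (f g : Module.End K (TensorAlgebra K W)) :
    (conv K W f g) ∘ₗ shuffleOp K W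
      = conv K W (f ∘ₗ shuffleOp K W) (g ∘ₗ shuffleOp K W) := by
  have e : TensorProduct.map f g ∘ₗ TensorProduct.map (shuffleOp K W) (shuffleOp K W)
      = TensorProduct.map (f ∘ₗ shuffleOp K W) (g ∘ₗ shuffleOp K W) := by
    rw [← TensorProduct.map_comp]
  apply LinearMap.ext; intro x
  have e' := LinearMap.congr_fun e (comul K W x)
  simp only [LinearMap.comp_apply] at e'
  calc (conv K W f g) (shuffleOp K W x)
      = LinearMap.mul' K T (TensorProduct.map f g (comul K W (shuffleOp K W x))) := rfl
    _ = LinearMap.mul' K T (TensorProduct.map f g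
        (TensorProduct.map (shuffleOp K W) (shuffleOp K W) (comul K W x))) := by
        rw [comul_shuffle]
    _ = LinearMap.mul' K T (TensorProduct.map (f ∘ₗ shuffleOp K W) (g ∘ₗ shuffleOp K W)
        (comul K W x)) := by rw [e']
    _ = conv K W (f ∘ₗ shuffleOp K W) (g ∘ₗ shuffleOp K W) x := rfl


-- === Part 4: bilinearity, powers, key span lemma ===

lemma conv_add_left (f g h : Module.End K (TensorAlgebra K W)) :
    conv K W (f + g) h = conv K W f h + conv K W g h := by
  unfold conv
  rw [TensorProduct.map_add_left, LinearMap.add_comp, LinearMap.comp_add]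

lemma conv_add_right (f g h : Module.End K (TensorAlgebra K W)) :
    conv K W f (g + h) = conv K W f g + conv K W f h := by
  unfold conv
  rw [TensorProduct.map_add_right, LinearMap.add_comp, LinearMap.comp_add]

lemma conv_smul_left (a : K) (f g : Module.End K (TensorAlgebra K W)) :
    conv K W (a • f) g = a • conv K W f g := by
  unfold conv
  rw [TensorProduct.map_smul_left, LinearMap.smul_comp, LinearMap.comp_smul]

lemma conv_smul_right (a : K) (f g : Module.End K (TensorAlgebra K W)) :
    conv K W f (a • g) = a • conv K W f g := by
  unfold conv
  rw [TensorProduct.map_smul_right, LinearMap.smul_comp, LinearMap.comp_smul]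

lemma conv_zero_right (f : Module.End K (TensorAlgebra K W)) :
    conv K W f 0 = 0 := by
  have := conv_smul_right K W (0 : K) f 0
  simpa using this

/-- convolution powers of `d` -/
noncomputable def cp : ℕ → Module.End K (TensorAlgebra K W)
  | 0 => u K W
  | (k+1) => conv K W (d K W) (cp k)

lemma cp_zero : cp K W 0 = u K W := rfl
lemma cp_succ (k : ℕ) : cp K W (k+1) = conv K W (d K W) (cp K W k) := rfl

lemma conv_d_cp (m : ℕ) : conv K W (d K W) (cp K W m) = cp K W (m+1) := rfl

lemma conv_dd_cp (m : ℕ) :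
    conv K W (conv K W (d K W) (d K W)) (cp K W m) = cp K W (m+2) := by
  rw [conv_assoc]
  have : conv K W (d K W) (cp K W m) = cp K W (m+1) := rfl
  rw [this]
  rfl

lemma cp_one : cp K W 1 = d K W := by
  rw [cp_succ, cp_zero, conv_u_right]

lemma s_conv : shuffleOp K W = conv K W LinearMap.id LinearMap.id := by
  unfold shuffleOp conv
  rw [TensorProduct.map_id, LinearMap.id_comp]

lemma id_decomp : (LinearMap.id : Module.End K (TensorAlgebra K W)) = u K W + d K W := by
  unfold d; abel

lemma s_expand :
    shuffleOp K W = u K W + ((2:K) • d K W + conv K W (d K W) (d K W)) := by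
  rw [s_conv, id_decomp, conv_add_left, conv_add_right, conv_add_right,
    conv_u_left, conv_u_left, conv_u_right, two_smul]
  abel

/-- ε∘μ -/
lemma cnt_mul :
    (cnt K W).toLinearMap ∘ₗ LinearMap.mul' K T
      = LinearMap.mul' K K ∘ₗ
          TensorProduct.map (cnt K W).toLinearMap (cnt K W).toLinearMap := by
  apply TensorProduct.ext'
  intro a b
  simp [map_mul]

lemma cnt_shuffle (x : T) : cnt K W (shuffleOp K W x) = cnt K W x := by
  have e8 : LinearMap.mul' K K ∘ₗ
        TensorProduct.map (cnt K W).toLinearMap (cnt K W).toLinearMap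
      = (cnt K W).toLinearMap ∘ₗ LinearMap.mul' K T ∘ₗ
          TensorProduct.map (u K W) LinearMap.id := by
    apply TensorProduct.ext'
    intro a b
    simp [u_apply, map_mul]
  have h1 := LinearMap.congr_fun (cnt_mul K W) (comul K W x)
  have h2 := LinearMap.congr_fun e8 (comul K W x)
  simp only [LinearMap.comp_apply, AlgHom.toLinearMap_apply] at h1 h2
  rw [shuffle_apply, h1, h2, counit_left]

lemma u_comp_s : (u K W) ∘ₗ shuffleOp K W = u K W := by
  apply LinearMap.ext; intro x
  simp only [LinearMap.comp_apply, u_apply, cnt_shuffle]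

lemma d_comp_s :
    (d K W) ∘ₗ shuffleOp K W = (2:K) • d K W + conv K W (d K W) (d K W) := by
  have : (d K W) ∘ₗ shuffleOp K W = shuffleOp K W - u K W := by
    unfold d
    rw [LinearMap.sub_comp, LinearMap.id_comp, u_comp_s]
  rw [this, s_expand]
  abel

/-- the span of high convolution powers -/
noncomputable def hi (k : ℕ) : Submodule K (Module.End K (TensorAlgebra K W)) :=
  Submodule.span K {f : Module.End K (TensorAlgebra K W) | ∃ m, k < m ∧ f = cp K W m}

lemma cp_mem_hi {k m : ℕ} (h : k < m) : cp K W m ∈ hi K W k :=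
  Submodule.subset_span ⟨m, h, rfl⟩

lemma conv_hi_mem {k k' : ℕ} (g : Module.End K (TensorAlgebra K W))
    (hg : ∀ m, k < m → conv K W g (cp K W m) ∈ hi K W k')
    {r : Module.End K (TensorAlgebra K W)} (hr : r ∈ hi K W k) :
    conv K W g r ∈ hi K W k' := by
  induction hr using Submodule.span_induction with
  | mem f hf =>
    obtain ⟨m, hm, rfl⟩ := hf
    exact hg m hm
  | zero => rw [conv_zero_right]; exact Submodule.zero_mem _
  | add f₁ f₂ _ _ h1 h2 => rw [conv_add_right]; exact Submodule.add_mem _ h1 h2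
  | smul a f _ h1 => rw [conv_smul_right]; exact Submodule.smul_mem _ _ h1

/-- KEY LEMMA: cp k ∘ s ≡ 2^k • cp k  modulo higher powers -/
lemma cp_comp_s (k : ℕ) :
    (cp K W k) ∘ₗ shuffleOp K W - (2:K)^k • cp K W k ∈ hi K W k := by
  induction k with
  | zero =>
    rw [cp_zero, u_comp_s, pow_zero, one_smul, sub_self]
    exact Submodule.zero_mem _
  | succ k ih =>
    set r := (cp K W k) ∘ₗ shuffleOp K W - (2:K)^k • cp K W k with hrdef
    have hr : (cp K W k) ∘ₗ shuffleOp K W = (2:K)^k • cp K W k + r := by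
      rw [hrdef]; abel
    have hcs : (cp K W (k+1)) ∘ₗ shuffleOp K W
        = conv K W ((d K W) ∘ₗ shuffleOp K W) ((cp K W k) ∘ₗ shuffleOp K W) := by
      rw [cp_succ, conv_comp_s]
    rw [hcs, d_comp_s, hr, conv_add_left, conv_add_right, conv_add_right,
      conv_smul_left, conv_smul_left, conv_smul_right, conv_smul_right,
      conv_d_cp, conv_dd_cp]
    have harith :
        (2:K) • ((2:K)^k • cp K W (k+1)) + (2:K) • conv K W (d K W) r
          + ((2:K)^k • cp K W (k+2) + conv K W (conv K W (d K W) (d K W)) r)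
          - (2:K)^(k+1) • cp K W (k+1)
        = (2:K) • conv K W (d K W) r + (2:K)^k • cp K W (k+2)
          + conv K W (conv K W (d K W) (d K W)) r := by
      rw [pow_succ]
      module
    rw [harith]
    have m1 : conv K W (d K W) r ∈ hi K W (k+1) := by
      apply conv_hi_mem K W (k := k) _ _ ih
      intro m hm
      rw [conv_d_cp]
      exact cp_mem_hi K W (by omega)
    have m2 : cp K W (k+2) ∈ hi K W (k+1) := cp_mem_hi K W (by omega)
    have m3 : conv K W (conv K W (d K W) (d K W)) r ∈ hi K W (k+1) := by
      apply conv_hi_mem K W (k := k) _ _ ih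
      intro m hm
      rw [conv_dd_cp]
      exact cp_mem_hi K W (by omega)
    exact Submodule.add_mem _ (Submodule.add_mem _ (Submodule.smul_mem _ _ m1)
      (Submodule.smul_mem _ _ m2)) m3

-- === Part 5: vanishing of high convolution powers on W^{⊗ m} ===

/-- degree-one part -/
noncomputable def RR : Submodule K (TensorAlgebra K W) :=
  LinearMap.range (TensorAlgebra.ι K : W →ₗ[K] TensorAlgebra K W)

noncomputable def QQ (i j : ℕ) : Submodule K (T ⊗[K] T) :=
  Submodule.map₂ (TensorProduct.mk K T T) (RR K W ^ i) (RR K W ^ j)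

noncomputable def SS (m : ℕ) : Submodule K (T ⊗[K] T) :=
  ⨆ (p : ℕ) (_ : p ≤ m), QQ K W p (m - p)

lemma QQ_le_SS {p m : ℕ} (h : p ≤ m) : QQ K W p (m - p) ≤ SS K W m := by
  exact le_iSup₂ (f := fun (p : ℕ) (_ : p ≤ m) => QQ K W p (m - p)) p h

lemma deltaR : ∀ (m : ℕ) (x : T), x ∈ RR K W ^ m → comul K W x ∈ SS K W m := by
  intro m
  induction m with
  | zero =>
    intro x hx
    rw [pow_zero] at hx
    obtain ⟨c, rfl⟩ := Submodule.mem_one.mp hx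
    have h1 : comul K W (algebraMap K T c) = c • ((1 : T) ⊗ₜ[K] (1 : T)) := by
      rw [AlgHom.commutes]
      rw [Algebra.algebraMap_eq_smul_one, Algebra.TensorProduct.one_def]
    rw [h1]
    apply Submodule.smul_mem
    apply QQ_le_SS K W (le_refl 0)
    exact Submodule.apply_mem_map₂ _ (by rw [pow_zero]; exact Submodule.mem_one.mpr ⟨1, map_one _⟩)
      (by rw [pow_zero]; exact Submodule.mem_one.mpr ⟨1, map_one _⟩)
  | succ m ih =>
    intro x hx
    rw [pow_succ] at hx
    refine Submodule.mul_induction_on hx ?_ ?_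
    · intro a ha b hb
      obtain ⟨w, rfl⟩ := hb
      have hmul : comul K W (a * TensorAlgebra.ι K w)
          = comul K W a * comul K W (TensorAlgebra.ι K w) := map_mul _ _ _
      rw [hmul]
      have hle : SS K W m ≤ Submodule.comap
          (LinearMap.mulRight K (comul K W (TensorAlgebra.ι K w))) (SS K W (m+1)) := by
        apply iSup_le; intro p; apply iSup_le; intro hp
        apply Submodule.map₂_le.mpr
        intro t ht t' ht'
        simp only [Submodule.mem_comap, LinearMap.mulRight_apply, TensorProduct.mk_apply]
        rw [comul_ι, mul_add, Algebra.TensorProduct.tmul_mul_tmul,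
          Algebra.TensorProduct.tmul_mul_tmul, mul_one, mul_one]
        apply Submodule.add_mem
        · have h1 : t * TensorAlgebra.ι K w ∈ RR K W ^ (p+1) := by
            rw [pow_succ]
            exact Submodule.mul_mem_mul ht ⟨w, rfl⟩
          have h2 : (m + 1) - (p + 1) = m - p := by omega
          apply QQ_le_SS K W (by omega : p + 1 ≤ m + 1)
          rw [h2]
          exact Submodule.apply_mem_map₂ _ h1 ht'
        · have h1 : t' * TensorAlgebra.ι K w ∈ RR K W ^ (m - p + 1) := by
            rw [pow_succ]
            exact Submodule.mul_mem_mul ht' ⟨w, rfl⟩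
          have h2 : (m + 1) - p = m - p + 1 := by omega
          apply QQ_le_SS K W (by omega : p ≤ m + 1)
          rw [h2]
          exact Submodule.apply_mem_map₂ _ ht h1
      exact hle (ih a ha)
    · intro y z h1 h2
      rw [map_add]
      exact Submodule.add_mem _ h1 h2

lemma d_algebraMap (c : K) : d K W (algebraMap K T c) = 0 := by
  unfold d
  simp only [LinearMap.sub_apply, LinearMap.id_apply, u_apply, AlgHom.commutes]
  simp [cnt]

lemma cp_vanish : ∀ (k m : ℕ), m < k → ∀ x ∈ RR K W ^ m, cp K W k x = 0 := by
  intro k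
  induction k with
  | zero => intro m hm; omega
  | succ k ih =>
    intro m hm x hx
    have hΔ : comul K W x ∈ SS K W m := deltaR K W m x hx
    have hker : SS K W m ≤ LinearMap.ker
        (LinearMap.mul' K T ∘ₗ TensorProduct.map (d K W) (cp K W k)) := by
      apply iSup_le; intro p; apply iSup_le; intro hp
      apply Submodule.map₂_le.mpr
      intro t ht t' ht'
      simp only [LinearMap.mem_ker, LinearMap.comp_apply, TensorProduct.mk_apply,
        TensorProduct.map_tmul, LinearMap.mul'_apply]
      rcases Nat.eq_zero_or_pos p with hp0 | hp1
      · subst hp0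
        rw [pow_zero] at ht
        obtain ⟨c, rfl⟩ := Submodule.mem_one.mp ht
        rw [d_algebraMap, zero_mul]
      · have : cp K W k t' = 0 := ih (m - p) (by omega) t' ht'
        rw [this, mul_zero]
    have := hker hΔ
    exact this

end SA

/-- the polynomial `∏_{i=0}^n (X - 2^i)` annihilates `s` on the degree-`n`
component `W^{⊗n}` of the tensor algebra. -/
theorem stmt3 {K W : Type*} [CommRing K] [Algebra ℚ K] [AddCommGroup W] [Module K W] (n : ℕ)
    (x : TensorAlgebra K W)
    (hx : x ∈ (LinearMap.range (TensorAlgebra.ι K : W →ₗ[K] TensorAlgebra K W)) ^ n) :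
    (Polynomial.aeval (shuffleOp K W : Module.End K (TensorAlgebra K W)))
      (∏ i ∈ Finset.range (n + 1), (Polynomial.X - Polynomial.C ((2 : K) ^ i))) x = 0 := by
  have main : ∀ (t j : ℕ), j + t = n + 1 → ∀ k, j ≤ k →
      SA.cp K W k ((Polynomial.aeval (shuffleOp K W : Module.End K (TensorAlgebra K W)))
        (∏ i ∈ Finset.Ico j (n+1), (Polynomial.X - Polynomial.C ((2:K)^i))) x) = 0 := by
    intro t
    induction t with
    | zero =>
      intro j hj k hk
      have hj' : j = n + 1 := by omega
      subst hj'
      rw [Finset.Ico_self, Finset.prod_empty, map_one, Module.End.one_apply]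
      exact SA.cp_vanish K W k n (by omega) x hx
    | succ t ih =>
      intro j hj k hk
      have hjlt : j < n + 1 := by omega
      set y' : TensorAlgebra K W :=
        (Polynomial.aeval (shuffleOp K W : Module.End K (TensorAlgebra K W)))
          (∏ i ∈ Finset.Ico (j+1) (n+1), (Polynomial.X - Polynomial.C ((2:K)^i))) x with hy'
      have ihy : ∀ m, j + 1 ≤ m → SA.cp K W m y' = 0 := fun m hm =>
        ih (j+1) (by omega) m hm
      have hyj : (Polynomial.aeval (shuffleOp K W : Module.End K (TensorAlgebra K W)))
            (∏ i ∈ Finset.Ico j (n+1), (Polynomial.X - Polynomial.C ((2:K)^i))) x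
          = shuffleOp K W y' - (2:K)^j • y' := by
        rw [Finset.prod_eq_prod_Ico_succ_bot hjlt, map_mul, Module.End.mul_apply, ← hy',
          map_sub, Polynomial.aeval_X, Polynomial.aeval_C, LinearMap.sub_apply,
          Module.algebraMap_end_apply]
      rw [hyj, map_sub, map_smul]
      -- evaluate the remainder from cp_comp_s at y'
      have hrem : ((SA.cp K W k) ∘ₗ shuffleOp K W - (2:K)^k • SA.cp K W k) y' = 0 := by
        have hmem := SA.cp_comp_s K W k
        set ρ := (SA.cp K W k) ∘ₗ shuffleOp K W - (2:K)^k • SA.cp K W k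
        clear_value ρ
        induction hmem using Submodule.span_induction with
        | mem f hf =>
          obtain ⟨m, hm, rfl⟩ := hf
          exact ihy m (by omega)
        | zero => rfl
        | add f₁ f₂ _ _ h1 h2 => rw [LinearMap.add_apply, h1, h2, add_zero]
        | smul a f _ h1 => rw [LinearMap.smul_apply, h1, smul_zero]
      have hs : SA.cp K W k (shuffleOp K W y') = (2:K)^k • SA.cp K W k y' := by
        have := hrem
        rw [LinearMap.sub_apply, LinearMap.comp_apply, LinearMap.smul_apply] at this
        exact sub_eq_zero.mp this
      rcases eq_or_lt_of_le hk with hkj | hkj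
      · subst hkj
        rw [hs]
        exact sub_self _
      · have h0 : SA.cp K W k y' = 0 := ihy k (by omega)
        rw [hs, h0, smul_zero, smul_zero, sub_self]
  have h0 := main (n+1) 0 (by omega)
  have hrange : Finset.range (n+1) = Finset.Ico 0 (n+1) := by rw [Finset.range_eq_Ico]
  set z : TensorAlgebra K W :=
    (Polynomial.aeval (shuffleOp K W : Module.End K (TensorAlgebra K W)))
      (∏ i ∈ Finset.range (n + 1), (Polynomial.X - Polynomial.C ((2 : K) ^ i))) x with hz
  have hcp : ∀ k, SA.cp K W k z = 0 := by
    intro k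
    have := h0 k (by omega)
    rw [← hrange] at this
    exact this
  have hdecomp : z = SA.cp K W 0 z + SA.cp K W 1 z := by
    rw [SA.cp_zero, SA.cp_one]
    unfold SA.d
    simp
  rw [hdecomp, hcp 0, hcp 1, add_zero]
end

section
/- Let W be a module over a commutative ring K containing Q, T(W) its tensor algebra with the Hopf structure in which W is primitive, s = μΔ the modified shuffle operator, and a ∈ T(W) a primitive element (Δ(a) = a ⊗ 1 + 1 ⊗ a). Then for every b ∈ T(W), s([a,b]) = [a, s(b)], where [x,y] = xy − yx (or the graded commutator in the graded setting). -/
open scoped TensorProduct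

section aux
variable {K W : Type*} [CommRing K] [AddCommGroup W] [Module K W]

local notation "A" => TensorAlgebra K W

lemma mul'_left (a : A) (x : A ⊗[K] A) :
    LinearMap.mul' K A ((a ⊗ₜ 1) * x) = a * LinearMap.mul' K A x := by
  induction x using TensorProduct.induction_on with
  | zero => simp
  | tmul u v => simp [Algebra.TensorProduct.tmul_mul_tmul, mul_assoc]
  | add x y hx hy => simp [mul_add, hx, hy]

lemma mul'_right (a : A) (x : A ⊗[K] A) :
    LinearMap.mul' K A (x * (1 ⊗ₜ a)) = LinearMap.mul' K A x * a := by
  induction x using TensorProduct.induction_on with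
  | zero => simp
  | tmul u v => simp [Algebra.TensorProduct.tmul_mul_tmul, mul_assoc]
  | add x y hx hy => simp [add_mul, hx, hy]

lemma mul'_cross (a : A) (x : A ⊗[K] A) :
    LinearMap.mul' K A ((1 ⊗ₜ a) * x) = LinearMap.mul' K A (x * (a ⊗ₜ 1)) := by
  induction x using TensorProduct.induction_on with
  | zero => simp
  | tmul u v => simp [Algebra.TensorProduct.tmul_mul_tmul, mul_assoc]
  | add x y hx hy => simp [add_mul, mul_add, hx, hy]

end aux

/-- if `a` is primitive then `s([a,b]) = [a, s(b)]`. -/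
theorem stmt5 {K W : Type*} [CommRing K] [Algebra ℚ K] [AddCommGroup W] [Module K W]
    (a b : TensorAlgebra K W)
    (ha : comul K W a = a ⊗ₜ 1 + 1 ⊗ₜ a) :
    shuffleOp K W (a * b - b * a) = a * shuffleOp K W b - shuffleOp K W b * a := by
  simp only [shuffleOp, LinearMap.comp_apply, AlgHom.toLinearMap_apply, map_sub, map_mul, ha]
  rw [add_mul, mul_add, map_add, map_add, mul'_left, mul'_right, mul'_cross]
  abel
end

section
/- Let W be a vector space over a field K of characteristic zero. An element x of the tensor algebra T(W) lying in positive tensor degree satisfies s(x) = 2x (where s = μΔ is the modified shuffle operator) if and only if x is a primitive element of T(W), i.e. x lies in the free Lie algebra L(W) ⊆ T(W). -/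
open scoped TensorProduct

attribute [local instance 100] LieRing.ofAssociativeRing

namespace Stmt6
open TensorAlgebra TensorProduct
set_option linter.unusedSectionVars false
set_option synthInstance.maxHeartbeats 1000000
set_option maxHeartbeats 1600000

variable (K W : Type*) [Field K] [CharZero K] [AddCommGroup W] [Module K W]

local notation "T" => TensorAlgebra K W

variable {K W}

lemma comul_ι (w : W) :
    comul K W (ι K w) = ι K w ⊗ₜ[K] 1 + 1 ⊗ₜ[K] ι K w := by
  simp [comul, TensorAlgebra.lift_ι_apply]

lemma eps_ι (w : W) : algebraMapInv (ι K w) = (0 : K) := by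
  simp [algebraMapInv]

lemma shuffleOp_apply (x : T) :
    shuffleOp K W x = LinearMap.mul' K T (comul K W x) := rfl

lemma isPrim_shuffle {x : T} (h : comul K W x = x ⊗ₜ[K] 1 + 1 ⊗ₜ[K] x) :
    shuffleOp K W x = (2 : K) • x := by
  rw [shuffleOp_apply, h]
  simp [two_smul]

variable (K W) in
/-- The Lie subalgebra of primitive elements. -/
noncomputable def primSub : LieSubalgebra K T where
  carrier := {x | comul K W x = x ⊗ₜ[K] 1 + 1 ⊗ₜ[K] x}
  add_mem' := by
    intro a b ha hb
    simp only [Set.mem_setOf_eq] at *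
    rw [map_add, ha, hb]
    rw [TensorProduct.add_tmul, TensorProduct.tmul_add]
    abel
  zero_mem' := by simp
  smul_mem' := by
    intro c x hx
    simp only [Set.mem_setOf_eq] at *
    rw [map_smul, hx]
    simp [TensorProduct.smul_tmul', TensorProduct.tmul_smul, smul_add]
  lie_mem' := by
    intro a b ha hb
    simp only [Set.mem_setOf_eq] at *
    simp only [Ring.lie_def, map_sub, map_mul, ha, hb, add_mul, mul_add,
      Algebra.TensorProduct.tmul_mul_tmul, one_mul, mul_one,
      TensorProduct.sub_tmul, TensorProduct.tmul_sub]
    abel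

variable (K W) in
noncomputable def LW : LieSubalgebra K T :=
  LieSubalgebra.lieSpan K T (Set.range (ι K : W →ₗ[K] T))

lemma lieSpan_le_prim : LW K W ≤ primSub K W := by
  apply LieSubalgebra.lieSpan_le.2
  rintro x ⟨w, rfl⟩
  exact comul_ι w

lemma prim_of_mem_lieSpan {x : T} (hx : x ∈ LW K W) :
    comul K W x = x ⊗ₜ[K] 1 + 1 ⊗ₜ[K] x :=
  lieSpan_le_prim hx


variable (K W) in
/-- `η ∘ ε : T → T`. -/
noncomputable def etaEps : T →ₐ[K] T :=
  (Algebra.ofId K T).comp (algebraMapInv)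

lemma etaEps_apply (x : T) : etaEps K W x = algebraMap K T (algebraMapInv x) := rfl

/-- right counit law -/
lemma counit_right :
    (Algebra.TensorProduct.map (AlgHom.id K T) (etaEps K W)).comp (comul K W) =
      Algebra.TensorProduct.includeLeft := by
  apply TensorAlgebra.hom_ext
  apply LinearMap.ext; intro w
  simp [comul_ι, etaEps_apply, eps_ι]

/-- left counit law -/
lemma counit_left :
    (Algebra.TensorProduct.map (etaEps K W) (AlgHom.id K T)).comp (comul K W) =
      Algebra.TensorProduct.includeRight := by
  apply TensorAlgebra.hom_ext
  apply LinearMap.ext; intro w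
  simp [comul_ι, etaEps_apply, eps_ι]

lemma counit_right_apply (x : T) :
    (Algebra.TensorProduct.map (AlgHom.id K T) (etaEps K W)) (comul K W x) = x ⊗ₜ[K] 1 :=
  AlgHom.congr_fun (counit_right (K := K) (W := W)) x

lemma counit_left_apply (x : T) :
    (Algebra.TensorProduct.map (etaEps K W) (AlgHom.id K T)) (comul K W x) = 1 ⊗ₜ[K] x :=
  AlgHom.congr_fun (counit_left (K := K) (W := W)) x

lemma eps_mul' (z : T ⊗[K] T) :
    algebraMapInv (LinearMap.mul' K T z) =
      Algebra.TensorProduct.lmul' K (S := K)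
        ((Algebra.TensorProduct.map (algebraMapInv) (algebraMapInv)) z) := by
  induction z using TensorProduct.induction_on with
  | zero => simp
  | tmul a b => simp
  | add u v hu hv => simp [map_add, hu, hv]

lemma eps_shuffle (x : T) : algebraMapInv (shuffleOp K W x) = algebraMapInv x := by
  have key : (Algebra.TensorProduct.lmul' K (S := K)).comp
      ((Algebra.TensorProduct.map (algebraMapInv) (algebraMapInv)).comp (comul K W)) =
      (algebraMapInv : T →ₐ[K] K) := by
    apply TensorAlgebra.hom_ext
    apply LinearMap.ext; intro w
    simp [comul_ι, eps_ι]
  rw [shuffleOp_apply, eps_mul']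
  exact AlgHom.congr_fun key x

/-- The key cocommutativity-type fact: the middle-swap fixes `(Δ ⊗ Δ) ∘ Δ`. -/
lemma ttc_comulcomul :
    (Algebra.TensorProduct.tensorTensorTensorComm K K K K T T T T).toAlgHom.comp
      ((Algebra.TensorProduct.map (comul K W) (comul K W)).comp (comul K W)) =
    (Algebra.TensorProduct.map (comul K W) (comul K W)).comp (comul K W) := by
  apply TensorAlgebra.hom_ext
  apply LinearMap.ext; intro w
  simp only [AlgHom.comp_toLinearMap, LinearMap.coe_comp, Function.comp_apply,
    AlgHom.toLinearMap_apply]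
  rw [comul_ι]
  simp only [map_add, Algebra.TensorProduct.map_tmul, comul_ι, map_one,
    TensorProduct.add_tmul, TensorProduct.tmul_add]
  simp only [AlgEquiv.toAlgHom_eq_coe, AlgHom.coe_coe, Algebra.TensorProduct.one_def,
    Algebra.TensorProduct.tensorTensorTensorComm_tmul]
  rw [AlgEquiv.coe_algHom]
  simp only [Algebra.TensorProduct.tensorTensorTensorComm_tmul]
  abel

lemma mul'_ttc (z : (T ⊗[K] T) ⊗[K] (T ⊗[K] T)) :
    LinearMap.mul' K (T ⊗[K] T) z =
      (TensorProduct.map (LinearMap.mul' K T) (LinearMap.mul' K T))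
        ((TensorProduct.tensorTensorTensorComm K T T T T) z) := by
  induction z using TensorProduct.induction_on with
  | zero => simp
  | add u v hu hv => simp only [map_add, hu, hv]
  | tmul u v =>
    induction u using TensorProduct.induction_on with
    | zero => simp [TensorProduct.zero_tmul]
    | add a b ha hb => simp only [TensorProduct.add_tmul, map_add, ha, hb]
    | tmul a b =>
      induction v using TensorProduct.induction_on with
      | zero => simp [TensorProduct.tmul_zero]
      | add c d hc hd => simp only [TensorProduct.tmul_add, map_add, hc, hd]
      | tmul c d =>
        simp [TensorProduct.tensorTensorTensorComm_tmul,
          Algebra.TensorProduct.tmul_mul_tmul]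

lemma comul_mul' (z : T ⊗[K] T) :
    comul K W (LinearMap.mul' K T z) =
      LinearMap.mul' K (T ⊗[K] T)
        ((TensorProduct.map (comul K W).toLinearMap (comul K W).toLinearMap) z) := by
  induction z using TensorProduct.induction_on with
  | zero => simp
  | tmul a b => simp [map_mul]
  | add u v hu hv => simp [map_add, hu, hv]

/-- `s` is a coalgebra map. -/
lemma comul_shuffle (x : T) :
    comul K W (shuffleOp K W x) =
      (TensorProduct.map (shuffleOp K W) (shuffleOp K W)) (comul K W x) := by
  rw [shuffleOp_apply, comul_mul', mul'_ttc]
  have h4 := AlgHom.congr_fun (ttc_comulcomul (K := K) (W := W)) x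
  simp only [AlgHom.coe_comp, Function.comp_apply, AlgEquiv.toAlgHom_eq_coe,
    AlgHom.coe_coe] at h4
  have h4' : (TensorProduct.tensorTensorTensorComm K T T T T)
      ((TensorProduct.map (comul K W).toLinearMap (comul K W).toLinearMap) (comul K W x)) =
      (TensorProduct.map (comul K W).toLinearMap (comul K W).toLinearMap) (comul K W x) := h4
  rw [h4']
  generalize comul K W x = z
  induction z using TensorProduct.induction_on with
  | zero => simp
  | tmul a b => simp [shuffleOp_apply]
  | add u v hu hv => simp [map_add, hu, hv]


/-! ### The antipode -/

variable (K W) in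
noncomputable def antipodeOp : T →ₐ[K] (T)ᵐᵒᵖ :=
  TensorAlgebra.lift K ((MulOpposite.opLinearEquiv K).toLinearMap ∘ₗ (-(ι K : W →ₗ[K] T)))

variable (K W) in
noncomputable def SA : T →ₗ[K] T :=
  (MulOpposite.opLinearEquiv K).symm.toLinearMap ∘ₗ (antipodeOp K W).toLinearMap

lemma SA_ι (w : W) : SA K W (ι K w) = -(ι K w) := by
  simp [SA, antipodeOp, TensorAlgebra.lift_ι_apply]

lemma SA_one : SA K W 1 = 1 := by
  simp [SA, antipodeOp]

lemma SA_algebraMap (r : K) : SA K W (algebraMap K T r) = algebraMap K T r := by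
  simp [SA, antipodeOp]

lemma SA_mul (a b : T) : SA K W (a * b) = SA K W b * SA K W a := by
  simp only [SA, antipodeOp, LinearMap.coe_comp, Function.comp_apply,
    AlgHom.toLinearMap_apply, map_mul, LinearEquiv.coe_coe]
  rfl

/-! ### The grading derivation N -/

variable (K W) in
noncomputable def gradePhi : T →ₐ[K] TrivSqZeroExt T T :=
  TensorAlgebra.lift K
    ({ toFun := fun w => TrivSqZeroExt.inl (ι K w) + TrivSqZeroExt.inr (ι K w),
       map_add' := by intro a b; apply TrivSqZeroExt.ext <;> simp
       map_smul' := by intro c a; apply TrivSqZeroExt.ext <;> simp } : W →ₗ[K] TrivSqZeroExt T T)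

lemma gradePhi_fst : ∀ x : T, (gradePhi K W x).fst = x := by
  intro x
  have : (TrivSqZeroExt.fstHom K T T).comp (gradePhi K W) = AlgHom.id K T := by
    apply TensorAlgebra.hom_ext
    apply LinearMap.ext; intro w
    simp [gradePhi, TensorAlgebra.lift_ι_apply]
  exact AlgHom.congr_fun this x

variable (K W) in
noncomputable def NN : T →ₗ[K] T where
  toFun := fun x => (gradePhi K W x).snd
  map_add' := by intro a b; simp
  map_smul' := by intro c a; simp

lemma NN_ι (w : W) : NN K W (ι K w) = ι K w := by
  simp [NN, gradePhi, TensorAlgebra.lift_ι_apply]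

lemma NN_algebraMap (r : K) : NN K W (algebraMap K T r) = 0 := by
  simp only [NN, LinearMap.coe_mk, AddHom.coe_mk]
  rw [AlgHom.commutes]
  rfl

lemma NN_one : NN K W 1 = 0 := by
  simpa using NN_algebraMap (K := K) (W := W) 1

lemma NN_mul (a b : T) : NN K W (a * b) = a * NN K W b + NN K W a * b := by
  simp only [NN, LinearMap.coe_mk, AddHom.coe_mk, map_mul]
  rw [TrivSqZeroExt.snd_mul, gradePhi_fst, gradePhi_fst]
  rw [smul_eq_mul, op_smul_eq_mul]


/-! ### The antipode law and the Dynkin operator -/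

lemma mulSAid_mul_gen (w : W) (z : T ⊗[K] T) :
    LinearMap.mul' K T ((TensorProduct.map (SA K W) LinearMap.id)
        (z * (ι K w ⊗ₜ[K] 1 + 1 ⊗ₜ[K] ι K w))) =
      -(ι K w * LinearMap.mul' K T ((TensorProduct.map (SA K W) LinearMap.id) z)) +
        LinearMap.mul' K T ((TensorProduct.map (SA K W) LinearMap.id) z) * ι K w := by
  induction z using TensorProduct.induction_on with
  | zero => simp
  | add u v hu hv =>
    rw [add_mul, map_add, map_add, map_add, map_add, hu, hv]
    noncomm_ring
  | tmul a b =>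
    rw [mul_add]
    simp only [Algebra.TensorProduct.tmul_mul_tmul, mul_one, one_mul, map_add,
      TensorProduct.map_tmul, LinearMap.mul'_apply, LinearMap.id_coe, id_eq]
    rw [SA_mul, SA_ι]
    noncomm_ring

/-- The antipode law `μ ∘ (S ⊗ id) ∘ Δ = η ∘ ε`. -/
lemma antipode_law (x : T) :
    LinearMap.mul' K T ((TensorProduct.map (SA K W) LinearMap.id) (comul K W x)) =
      algebraMap K T (algebraMapInv x) := by
  set P : T → Prop := fun x => LinearMap.mul' K T
      ((TensorProduct.map (SA K W) LinearMap.id) (comul K W x)) =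
      algebraMap K T (algebraMapInv x) with hP
  have hP1 : P 1 := by
    simp only [P, map_one, Algebra.TensorProduct.one_def, TensorProduct.map_tmul,
      LinearMap.mul'_apply, LinearMap.id_coe, id_eq, SA_one, one_mul]
  have key : ∀ y x, P x → P (x * y) := by
    intro y
    induction y using TensorAlgebra.induction with
    | algebraMap r =>
      intro x hx
      have : x * algebraMap K T r = r • x := by
        rw [← Algebra.commutes, ← Algebra.smul_def]
      simp only [hP] at hx ⊢
      rw [this, map_smul, map_smul, map_smul, hx, map_smul, smul_eq_mul, map_mul,
        ← Algebra.smul_def]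
    | ι w =>
      intro x hx
      simp only [hP] at hx ⊢
      rw [map_mul, comul_ι, mulSAid_mul_gen, hx]
      rw [map_mul, eps_ι, mul_zero, map_zero, Algebra.commutes]
      exact neg_add_cancel _
    | mul a b ha hb =>
      intro x hx
      rw [← mul_assoc]
      exact hb _ (ha _ hx)
    | add a b ha hb =>
      intro x hx
      have h1 := ha x hx
      have h2 := hb x hx
      simp only [hP] at h1 h2 ⊢
      rw [mul_add, map_add, map_add, map_add, h1, h2]
      rw [map_add]
      exact (map_add (algebraMap K T) _ _).symm
  simpa using key x 1 hP1

variable (K W) in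
/-- The (left-normed) Dynkin operator `μ ∘ (S ⊗ N) ∘ Δ`. -/
noncomputable def DD : T →ₗ[K] T :=
  LinearMap.mul' K T ∘ₗ (TensorProduct.map (SA K W) (NN K W)) ∘ₗ (comul K W).toLinearMap

lemma DD_apply (x : T) :
    DD K W x = LinearMap.mul' K T ((TensorProduct.map (SA K W) (NN K W)) (comul K W x)) := rfl

lemma mulSANN_mul_gen (w : W) (z : T ⊗[K] T) :
    LinearMap.mul' K T ((TensorProduct.map (SA K W) (NN K W))
        (z * (ι K w ⊗ₜ[K] 1 + 1 ⊗ₜ[K] ι K w))) =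
      ⁅LinearMap.mul' K T ((TensorProduct.map (SA K W) (NN K W)) z), ι K w⁆ +
        LinearMap.mul' K T ((TensorProduct.map (SA K W) LinearMap.id) z) * ι K w := by
  induction z using TensorProduct.induction_on with
  | zero => simp
  | add u v hu hv =>
    simp only [add_mul, map_add, hu, hv, Ring.lie_def]
    noncomm_ring
  | tmul a b =>
    rw [mul_add]
    simp only [Algebra.TensorProduct.tmul_mul_tmul, mul_one, one_mul, map_add,
      TensorProduct.map_tmul, LinearMap.mul'_apply, LinearMap.id_coe, id_eq]
    rw [SA_mul, SA_ι, NN_mul, NN_ι, Ring.lie_def]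
    noncomm_ring

lemma DD_mul_gen (x : T) (w : W) :
    DD K W (x * ι K w) = ⁅DD K W x, ι K w⁆ + algebraMapInv x • ι K w := by
  rw [DD_apply, DD_apply, map_mul, comul_ι, mulSANN_mul_gen, antipode_law,
    Algebra.smul_def]

lemma DD_mem_lieSpan (x : T) : DD K W x ∈ LW K W := by
  have h1 : DD K W 1 = 0 := by
    rw [DD_apply, map_one, Algebra.TensorProduct.one_def]
    simp [NN_one]
  have key : ∀ y x, DD K W x ∈ LW K W → DD K W (x * y) ∈ LW K W := by
    intro y
    induction y using TensorAlgebra.induction with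
    | algebraMap r =>
      intro x hx
      have : x * algebraMap K T r = r • x := by
        rw [← Algebra.commutes, ← Algebra.smul_def]
      rw [this, map_smul]
      exact Submodule.smul_mem _ _ hx
    | ι w =>
      intro x hx
      rw [DD_mul_gen]
      refine add_mem ?_ ?_
      · exact LieSubalgebra.lie_mem _ hx (LieSubalgebra.subset_lieSpan ⟨w, rfl⟩)
      · exact Submodule.smul_mem _ _ (LieSubalgebra.subset_lieSpan ⟨w, rfl⟩)
    | mul a b ha hb =>
      intro x hx
      rw [← mul_assoc]
      exact hb _ (ha _ hx)
    | add a b ha hb =>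
      intro x hx
      rw [mul_add, map_add]
      exact add_mem (ha x hx) (hb x hx)
  simpa using key x 1 (by rw [h1]; exact zero_mem _)

lemma DD_prim {x : T} (h : comul K W x = x ⊗ₜ[K] 1 + 1 ⊗ₜ[K] x) :
    DD K W x = NN K W x := by
  rw [DD_apply, h]
  simp [NN_one, SA_one]

/-! ### Grading -/

variable (K W) in
noncomputable def gr (n : ℕ) : Submodule K T :=
  LinearMap.range (ι K : W →ₗ[K] T) ^ n

lemma NN_grade (n : ℕ) (x : T) (hx : x ∈ gr K W n) : NN K W x = (n : K) • x := by
  refine Submodule.pow_induction_on_left' (M := LinearMap.range (ι K : W →ₗ[K] T))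
    (C := fun n x _ => NN K W x = (n : K) • x) ?_ ?_ ?_ hx
  · intro r
    simp [NN_algebraMap]
  · intro a b i _ _ ha hb
    rw [map_add, ha, hb, smul_add]
  · rintro m ⟨w, rfl⟩ i y _ hy
    rw [NN_mul, hy, NN_ι, Nat.cast_succ, add_smul, one_smul, mul_smul_comm]


variable (K W) in
noncomputable def Bsub (p q : ℕ) : Submodule K (T ⊗[K] T) :=
  LinearMap.range (TensorProduct.map (gr K W p).subtype (gr K W q).subtype)

lemma mem_Bsub_tmul {p q : ℕ} {a b : T} (ha : a ∈ gr K W p) (hb : b ∈ gr K W q) :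
    a ⊗ₜ[K] b ∈ Bsub K W p q :=
  ⟨(⟨a, ha⟩ : gr K W p) ⊗ₜ[K] (⟨b, hb⟩ : gr K W q), rfl⟩

lemma Bsub_le {p q : ℕ} {N : Submodule K (T ⊗[K] T)}
    (h : ∀ a ∈ gr K W p, ∀ b ∈ gr K W q, a ⊗ₜ[K] b ∈ N) : Bsub K W p q ≤ N := by
  rintro z ⟨z', rfl⟩
  induction z' using TensorProduct.induction_on with
  | zero => simp
  | tmul a b => exact h a a.2 b b.2
  | add u v hu hv => rw [map_add]; exact add_mem hu hv

variable (K W) in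
noncomputable def Cgr (n : ℕ) : Submodule K (T ⊗[K] T) :=
  ⨆ p ∈ Finset.range (n + 1), Bsub K W p (n - p)

lemma one_mem_gr0 : (1 : T) ∈ gr K W 0 := by
  rw [gr, pow_zero, Submodule.mem_one]
  exact ⟨1, map_one _⟩

lemma ι_mem_gr1 (w : W) : ι K w ∈ gr K W 1 := by
  rw [gr, pow_one]
  exact ⟨w, rfl⟩

lemma mul_mem_gr {p q : ℕ} {a b : T} (ha : a ∈ gr K W p) (hb : b ∈ gr K W q) :
    a * b ∈ gr K W (p + q) := by
  rw [gr, pow_add]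
  exact Submodule.mul_mem_mul ha hb

lemma comul_grade (n : ℕ) (x : T) (hx : x ∈ gr K W n) : comul K W x ∈ Cgr K W n := by
  refine Submodule.pow_induction_on_left' (M := LinearMap.range (ι K : W →ₗ[K] T))
    (C := fun n x _ => comul K W x ∈ Cgr K W n) ?_ ?_ ?_ hx
  · intro r
    have h1 : ((1 : T) ⊗ₜ[K] (1 : T)) ∈ Bsub K W 0 0 := mem_Bsub_tmul one_mem_gr0 one_mem_gr0
    have : comul K W (algebraMap K T r) = r • (1 ⊗ₜ[K] 1) := by
      rw [AlgHom.commutes]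
      rw [Algebra.TensorProduct.algebraMap_apply]
      rw [Algebra.algebraMap_eq_smul_one]
      rw [TensorProduct.smul_tmul']
    rw [this]
    refine Submodule.smul_mem _ _ ?_
    exact le_iSup₂ (f := fun p (_ : p ∈ Finset.range (0 + 1)) => Bsub K W p (0 - p)) 0
      (by simp) h1
  · intro a b i _ _ ha hb
    rw [map_add]; exact add_mem ha hb
  · rintro m ⟨w, rfl⟩ i y _ hy
    rw [map_mul, comul_ι]
    have key : Cgr K W i ≤ Submodule.comap
        (LinearMap.mulLeft K (ι K w ⊗ₜ[K] (1:T) + (1:T) ⊗ₜ[K] ι K w)) (Cgr K W (i + 1)) := by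
      refine iSup₂_le ?_
      intro p hp
      simp only [Finset.mem_range, Nat.lt_succ_iff] at hp
      refine Bsub_le ?_
      intro a ha b hb
      simp only [Submodule.mem_comap, LinearMap.mulLeft_apply]
      rw [add_mul, Algebra.TensorProduct.tmul_mul_tmul, Algebra.TensorProduct.tmul_mul_tmul,
        one_mul, one_mul]
      refine add_mem ?_ ?_
      · have hmem : ((ι K w * a) ⊗ₜ[K] b) ∈ Bsub K W (p+1) (i + 1 - (p+1)) := by
          rw [show i + 1 - (p+1) = i - p by omega]
          have hga : ι K w * a ∈ gr K W (p + 1) := by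
            have := mul_mem_gr (ι_mem_gr1 w) ha
            rwa [add_comm] at this
          exact mem_Bsub_tmul hga hb
        exact le_iSup₂ (f := fun p (_ : p ∈ Finset.range (i + 1 + 1)) => Bsub K W p (i + 1 - p))
          (p + 1) (by simp only [Finset.mem_range]; omega) hmem
      · have hmem : (a ⊗ₜ[K] (ι K w * b)) ∈ Bsub K W p (i + 1 - p) := by
          rw [show i + 1 - p = 1 + (i - p) by omega]
          exact mem_Bsub_tmul ha (mul_mem_gr (ι_mem_gr1 w) hb)
        exact le_iSup₂ (f := fun p (_ : p ∈ Finset.range (i + 1 + 1)) => Bsub K W p (i + 1 - p))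
          p (by simp only [Finset.mem_range]; omega) hmem
    exact key hy

lemma eps_grade {n : ℕ} (hn : 1 ≤ n) (x : T) (hx : x ∈ gr K W n) :
    algebraMapInv x = (0 : K) := by
  obtain ⟨m, rfl⟩ : ∃ m, n = m + 1 := ⟨n - 1, by omega⟩
  rw [gr, pow_succ'] at hx
  refine Submodule.mul_induction_on hx ?_ ?_
  · rintro m ⟨w, rfl⟩ y _
    rw [map_mul, eps_ι, zero_mul]
  · intro a b ha hb
    rw [map_add, ha, hb, add_zero]

lemma shuffle_grade (n : ℕ) (x : T) (hx : x ∈ gr K W n) : shuffleOp K W x ∈ gr K W n := by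
  rw [shuffleOp_apply]
  have h := comul_grade n x hx
  have key : Cgr K W n ≤ Submodule.comap (LinearMap.mul' K T) (gr K W n) := by
    refine iSup₂_le ?_
    intro p hp
    simp only [Finset.mem_range, Nat.lt_succ_iff] at hp
    refine Bsub_le ?_
    intro a ha b hb
    simp only [Submodule.mem_comap, LinearMap.mul'_apply]
    have : p + (n - p) = n := by omega
    exact this ▸ mul_mem_gr ha hb
  exact key h

/-! ### The reduced coproduct -/

variable (K W) in
noncomputable def JJ : T →ₗ[K] T :=
  LinearMap.id - (Algebra.linearMap K T) ∘ₗ (algebraMapInv : T →ₐ[K] K).toLinearMap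

lemma JJ_apply (x : T) : JJ K W x = x - algebraMap K T (algebraMapInv x) := rfl

lemma JJ_of_eps_zero {x : T} (h : algebraMapInv x = (0 : K)) : JJ K W x = x := by
  rw [JJ_apply, h, map_zero, sub_zero]

lemma JJ_gr0 {x : T} (hx : x ∈ gr K W 0) : JJ K W x = 0 := by
  rw [gr, pow_zero] at hx
  obtain ⟨r, rfl⟩ := Submodule.mem_one.mp hx
  rw [JJ_apply]
  rw [show algebraMapInv (algebraMap K T r) = r by rw [AlgHom.commutes]; simp]
  simp

variable (K W) in
noncomputable def Dbar : T →ₗ[K] T ⊗[K] T :=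
  (TensorProduct.map (JJ K W) (JJ K W)) ∘ₗ (comul K W).toLinearMap

lemma Dbar_apply (x : T) :
    Dbar K W x = (TensorProduct.map (JJ K W) (JJ K W)) (comul K W x) := rfl

variable (K W) in
noncomputable def Mgr (n : ℕ) : Submodule K (T ⊗[K] T) :=
  ⨆ p ∈ Finset.Icc 1 (n - 1), Bsub K W p (n - p)

lemma Dbar_grade (n : ℕ) (x : T) (hx : x ∈ gr K W n) : Dbar K W x ∈ Mgr K W n := by
  rw [Dbar_apply]
  have h := comul_grade n x hx
  have key : Cgr K W n ≤ Submodule.comap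
      (TensorProduct.map (JJ K W) (JJ K W)) (Mgr K W n) := by
    refine iSup₂_le ?_
    intro p hp
    simp only [Finset.mem_range, Nat.lt_succ_iff] at hp
    refine Bsub_le ?_
    intro a ha b hb
    simp only [Submodule.mem_comap, TensorProduct.map_tmul]
    rcases Nat.eq_zero_or_pos p with h0 | h1
    · subst h0
      rw [JJ_gr0 ha, TensorProduct.zero_tmul]
      exact zero_mem _
    rcases Nat.eq_zero_or_pos (n - p) with h0 | h2
    · rw [h0, gr, pow_zero] at hb
      have : JJ K W b = 0 := JJ_gr0 (by rw [gr, pow_zero]; exact hb)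
      rw [this, TensorProduct.tmul_zero]
      exact zero_mem _
    · rw [JJ_of_eps_zero (eps_grade h1 a ha), JJ_of_eps_zero (eps_grade h2 b hb)]
      refine le_iSup₂ (f := fun p (_ : p ∈ Finset.Icc 1 (n-1)) => Bsub K W p (n - p)) p
        (by simp only [Finset.mem_Icc]; omega) ?_
      exact mem_Bsub_tmul ha hb
  exact key h

lemma shuffle_one : shuffleOp K W (1 : T) = 1 := by
  rw [shuffleOp_apply, map_one, Algebra.TensorProduct.one_def, LinearMap.mul'_apply, one_mul]

lemma shuffle_algebraMap (r : K) : shuffleOp K W (algebraMap K T r) = algebraMap K T r := by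
  rw [Algebra.algebraMap_eq_smul_one, map_smul, shuffle_one]

lemma JJ_shuffle (x : T) : JJ K W (shuffleOp K W x) = shuffleOp K W (JJ K W x) := by
  rw [JJ_apply, JJ_apply, eps_shuffle, map_sub, shuffle_algebraMap]

lemma Dbar_shuffle (x : T) :
    Dbar K W (shuffleOp K W x) =
      (TensorProduct.map (shuffleOp K W) (shuffleOp K W)) (Dbar K W x) := by
  rw [Dbar_apply, Dbar_apply, comul_shuffle]
  generalize comul K W x = z
  induction z using TensorProduct.induction_on with
  | zero => simp
  | tmul a b => simp only [TensorProduct.map_tmul, JJ_shuffle]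
  | add u v hu hv => simp only [map_add, hu, hv]

/-- the key identity `Δ̄ x = Δ x - x ⊗ 1 - 1 ⊗ x` for `ε x = 0`. -/
lemma Dbar_eq {x : T} (h : algebraMapInv x = (0 : K)) :
    Dbar K W x = comul K W x - x ⊗ₜ[K] 1 - 1 ⊗ₜ[K] x := by
  have expand : ∀ z : T ⊗[K] T, (TensorProduct.map (JJ K W) (JJ K W)) z =
      z - (TensorProduct.map LinearMap.id ((Algebra.linearMap K T) ∘ₗ
            (algebraMapInv : T →ₐ[K] K).toLinearMap)) z
        - (TensorProduct.map ((Algebra.linearMap K T) ∘ₗ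
            (algebraMapInv : T →ₐ[K] K).toLinearMap) LinearMap.id) z
        + (TensorProduct.map ((Algebra.linearMap K T) ∘ₗ
            (algebraMapInv : T →ₐ[K] K).toLinearMap) ((Algebra.linearMap K T) ∘ₗ
            (algebraMapInv : T →ₐ[K] K).toLinearMap)) z := by
    intro z
    induction z using TensorProduct.induction_on with
    | zero => simp
    | tmul a b =>
      simp only [TensorProduct.map_tmul, JJ_apply, LinearMap.id_coe, id_eq,
        LinearMap.coe_comp, Function.comp_apply, AlgHom.toLinearMap_apply,
        Algebra.linearMap_apply, TensorProduct.sub_tmul, TensorProduct.tmul_sub]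
      abel
    | add u v hu hv =>
      simp only [map_add, hu, hv]
      abel
  rw [Dbar_apply, expand]
  have e1 : (TensorProduct.map LinearMap.id ((Algebra.linearMap K T) ∘ₗ
      (algebraMapInv : T →ₐ[K] K).toLinearMap)) (comul K W x) = x ⊗ₜ[K] 1 :=
    counit_right_apply x
  have e2 : (TensorProduct.map ((Algebra.linearMap K T) ∘ₗ
      (algebraMapInv : T →ₐ[K] K).toLinearMap) LinearMap.id) (comul K W x) = 1 ⊗ₜ[K] x :=
    counit_left_apply x
  have e3 : (TensorProduct.map ((Algebra.linearMap K T) ∘ₗ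
      (algebraMapInv : T →ₐ[K] K).toLinearMap) ((Algebra.linearMap K T) ∘ₗ
      (algebraMapInv : T →ₐ[K] K).toLinearMap)) (comul K W x) = 0 := by
    have key : (Algebra.TensorProduct.map (etaEps K W) (etaEps K W)).comp (comul K W) =
        (Algebra.ofId K (T ⊗[K] T)).comp (algebraMapInv) := by
      apply TensorAlgebra.hom_ext
      apply LinearMap.ext; intro w
      simp [comul_ι, etaEps_apply, eps_ι, Algebra.ofId_apply]
    have := AlgHom.congr_fun key x
    simp only [AlgHom.coe_comp, Function.comp_apply] at this
    have h2 : (Algebra.TensorProduct.map (etaEps K W) (etaEps K W)) (comul K W x) =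
        (Algebra.ofId K (T ⊗[K] T)) (algebraMapInv x) := this
    rw [h] at h2
    rw [show (Algebra.ofId K (T ⊗[K] T)) (0:K) = 0 from map_zero _] at h2
    exact h2
  rw [e1, e2, e3, add_zero]

lemma prim_of_Dbar_zero {x : T} (h0 : algebraMapInv x = (0 : K)) (h : Dbar K W x = 0) :
    comul K W x = x ⊗ₜ[K] 1 + 1 ⊗ₜ[K] x := by
  have := Dbar_eq (K := K) (W := W) h0
  rw [h] at this
  have := this.symm
  rw [sub_sub, sub_eq_zero] at this
  exact this


/-! ### Polynomial operator machinery -/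

open Polynomial Pointwise

variable (K W) in
noncomputable def sE : Module.End K T := shuffleOp K W

variable (K W) in
noncomputable def uE : Module.End K (T ⊗[K] T) :=
  TensorProduct.map (shuffleOp K W) LinearMap.id

variable (K W) in
noncomputable def vE : Module.End K (T ⊗[K] T) :=
  TensorProduct.map LinearMap.id (shuffleOp K W)

variable (K W) in
noncomputable def σE : Module.End K (T ⊗[K] T) :=
  TensorProduct.map (shuffleOp K W) (shuffleOp K W)

lemma σE_eq_uv : σE K W = uE K W * vE K W := by
  rw [σE, uE, vE, Module.End.mul_eq_comp, ← TensorProduct.map_comp,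
    LinearMap.comp_id, LinearMap.id_comp]

lemma σE_eq_vu : σE K W = vE K W * uE K W := by
  rw [σE, uE, vE, Module.End.mul_eq_comp, ← TensorProduct.map_comp,
    LinearMap.comp_id, LinearMap.id_comp]

lemma commute_uv : Commute (uE K W) (vE K W) := by
  rw [Commute, SemiconjBy, ← σE_eq_uv, ← σE_eq_vu]

lemma commute_u_aeval_v (q : K[X]) : Commute (uE K W) (aeval (vE K W) q) := by
  induction q using Polynomial.induction_on' with
  | add p q hp hq => rw [map_add]; exact hp.add_right hq
  | monomial n c =>
    rw [aeval_monomial]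
    refine Commute.mul_right ?_ ((commute_uv).pow_right n)
    exact (Algebra.commutes' c (uE K W)).symm

lemma commute_aeval_uv (p q : K[X]) : Commute (aeval (uE K W) p) (aeval (vE K W) q) := by
  induction p using Polynomial.induction_on' with
  | add p p' hp hp' => rw [map_add]; exact (hp.add_left hp')
  | monomial n c =>
    rw [aeval_monomial]
    refine Commute.mul_left ?_ (((commute_u_aeval_v q).pow_left n))
    exact (Algebra.commutes' c (aeval (vE K W) q))

lemma uE_tmul_aeval (p : K[X]) (a b : T) :
    aeval (uE K W) p (a ⊗ₜ[K] b) = (aeval (sE K W) p a) ⊗ₜ[K] b := by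
  induction p using Polynomial.induction_on' with
  | add p q hp hq =>
    rw [map_add, map_add, LinearMap.add_apply, LinearMap.add_apply, hp, hq,
      TensorProduct.add_tmul]
  | monomial n c =>
    have hpow : ∀ m : ℕ, ((uE K W) ^ m) (a ⊗ₜ[K] b) = ((sE K W ^ m) a) ⊗ₜ[K] b := by
      intro m
      induction m with
      | zero => simp
      | succ m ih =>
        rw [pow_succ', Module.End.mul_apply, ih,
          show ((uE K W) ((sE K W ^ m) a ⊗ₜ[K] b)) = (sE K W ((sE K W ^ m) a)) ⊗ₜ[K] b from rfl,
          ← Module.End.mul_apply, ← pow_succ']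
    rw [aeval_monomial, aeval_monomial, Module.End.mul_apply, Module.End.mul_apply,
      hpow, Module.algebraMap_end_apply, Module.algebraMap_end_apply,
      TensorProduct.smul_tmul']

lemma vE_tmul_aeval (p : K[X]) (a b : T) :
    aeval (vE K W) p (a ⊗ₜ[K] b) = a ⊗ₜ[K] (aeval (sE K W) p b) := by
  induction p using Polynomial.induction_on' with
  | add p q hp hq =>
    rw [map_add, map_add, LinearMap.add_apply, LinearMap.add_apply, hp, hq,
      TensorProduct.tmul_add]
  | monomial n c =>
    have hpow : ∀ m : ℕ, ((vE K W) ^ m) (a ⊗ₜ[K] b) = a ⊗ₜ[K] ((sE K W ^ m) b) := by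
      intro m
      induction m with
      | zero => simp
      | succ m ih =>
        rw [pow_succ', Module.End.mul_apply, ih,
          show ((vE K W) (a ⊗ₜ[K] (sE K W ^ m) b)) = a ⊗ₜ[K] (sE K W ((sE K W ^ m) b)) from rfl,
          ← Module.End.mul_apply, ← pow_succ']
    rw [aeval_monomial, aeval_monomial, Module.End.mul_apply, Module.End.mul_apply,
      hpow, Module.algebraMap_end_apply, Module.algebraMap_end_apply,
      TensorProduct.tmul_smul]

lemma kill_u {p q : ℕ} {P : K[X]} (h : ∀ a ∈ gr K W p, aeval (sE K W) P a = 0) :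
    ∀ z ∈ Bsub K W p q, aeval (uE K W) P z = 0 := by
  intro z hz
  refine Bsub_le (N := LinearMap.ker (aeval (uE K W) P)) ?_ hz
  intro a ha b hb
  rw [LinearMap.mem_ker, uE_tmul_aeval, h a ha, TensorProduct.zero_tmul]

lemma kill_v {p q : ℕ} {Q : K[X]} (h : ∀ b ∈ gr K W q, aeval (sE K W) Q b = 0) :
    ∀ z ∈ Bsub K W p q, aeval (vE K W) Q z = 0 := by
  intro z hz
  refine Bsub_le (N := LinearMap.ker (aeval (vE K W) Q)) ?_ hz
  intro a ha b hb
  rw [LinearMap.mem_ker, vE_tmul_aeval, h b hb, TensorProduct.tmul_zero]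

lemma kill_dvd {V : Type*} [AddCommGroup V] [Module K V] (f : Module.End K V)
    {P Q : K[X]} (hPQ : P ∣ Q) {z : V} (h : aeval f P z = 0) : aeval f Q z = 0 := by
  obtain ⟨R, rfl⟩ := hPQ
  rw [mul_comm, map_mul, Module.End.mul_apply, h, map_zero]

lemma aeval_eig {V : Type*} [AddCommGroup V] [Module K V] (f : Module.End K V)
    {c : K} {z : V} (h : f z = c • z) (P : K[X]) : aeval f P z = (P.eval c) • z := by
  induction P using Polynomial.induction_on' with
  | add p q hp hq =>
    rw [map_add, LinearMap.add_apply, hp, hq, eval_add, add_smul]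
  | monomial n a =>
    have hpow : ∀ m : ℕ, (f ^ m) z = (c ^ m) • z := by
      intro m
      induction m with
      | zero => simp
      | succ m ih => rw [pow_succ', Module.End.mul_apply, ih, map_smul, h, smul_smul, ← pow_succ]
    rw [aeval_monomial, Module.End.mul_apply, hpow, Module.algebraMap_end_apply,
      eval_monomial, smul_smul]

lemma two_pow_inj : Function.Injective (fun k : ℕ => (2 : K) ^ k) := by
  intro a b hab
  simp only at hab
  have : ((2 ^ a : ℕ) : K) = ((2 ^ b : ℕ) : K) := by push_cast; exact_mod_cast hab
  have := Nat.cast_injective (R := K) this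
  exact Nat.pow_right_injective (le_refl 2) this

lemma aeval_X_sub_C_apply {V : Type*} [AddCommGroup V] [Module K V] (f : Module.End K V)
    (c : K) (z : V) : aeval f (X - C c) z = f z - c • z := by
  rw [map_sub, LinearMap.sub_apply, aeval_X, aeval_C, Module.algebraMap_end_apply]

/-- key sub-lemma: if `u z = 2^j z` then a product of `(σ - 2^(j+k))` can be
converted into a product of `(v - 2^k)`. -/
lemma lemA1 (j : ℕ) (G : Finset ℕ) (z : T ⊗[K] T) (hz : uE K W z = ((2:K) ^ j) • z) :
    aeval (σE K W) (∏ k ∈ G, (X - C ((2:K) ^ (j + k)))) z =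
      (((2:K) ^ j) ^ G.card) • aeval (vE K W) (∏ k ∈ G, (X - C ((2:K) ^ k))) z := by
  classical
  induction G using Finset.induction_on with
  | empty => simp
  | @insert k G' hk ih =>
    have huz : ∀ q : K[X], uE K W (aeval (vE K W) q z) = ((2:K) ^ j) • aeval (vE K W) q z := by
      intro q
      have := congrArg (fun g => g z) ((commute_u_aeval_v (K := K) (W := W) q).eq)
      simp only [Module.End.mul_apply] at this
      rw [this, hz, map_smul]
    set w' := aeval (vE K W) (∏ k ∈ G', (X - C ((2:K) ^ k))) z with hw'
    have hσ : σE K W w' = ((2:K) ^ j) • vE K W w' := by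
      rw [σE_eq_uv, Module.End.mul_apply]
      have hv : vE K W w' = aeval (vE K W) (X * (∏ k ∈ G', (X - C ((2:K) ^ k)))) z := by
        rw [map_mul, Module.End.mul_apply, aeval_X, hw']
      rw [hv, huz, ← hv]
    rw [Finset.prod_insert hk, Finset.prod_insert hk, map_mul, map_mul,
      Module.End.mul_apply, Module.End.mul_apply, ih, ← hw', LinearMap.map_smul,
      aeval_X_sub_C_apply, aeval_X_sub_C_apply, hσ,
      Finset.card_insert_of_notMem hk, pow_add (2:K) j k]
    have hstep : ((2:K) ^ j) • vE K W w' - ((2:K) ^ j * (2:K) ^ k) • w' =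
        ((2:K) ^ j) • (vE K W w' - ((2:K) ^ k) • w') := by
      rw [smul_sub, smul_smul]
    rw [hstep, smul_smul, ← pow_succ]


lemma lemA (F G : Finset ℕ) : ∀ z : T ⊗[K] T,
    aeval (uE K W) (∏ j ∈ F, (X - C ((2:K) ^ j))) z = 0 →
    aeval (vE K W) (∏ k ∈ G, (X - C ((2:K) ^ k))) z = 0 →
    aeval (σE K W) (∏ m ∈ F + G, (X - C ((2:K) ^ m))) z = 0 := by
  classical
  induction F using Finset.induction_on with
  | empty =>
    intro z hu _
    simp only [Finset.prod_empty, map_one, Module.End.one_apply] at hu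
    rw [hu, map_zero]
  | @insert j F' hj ih =>
    intro z hu hv
    have hcop : IsCoprime (X - C ((2:K) ^ j)) (∏ k ∈ F', (X - C ((2:K) ^ k))) := by
      refine IsCoprime.prod_right ?_
      intro k hk
      exact Polynomial.pairwise_coprime_X_sub_C two_pow_inj
        (fun h : j = k => hj (h ▸ hk))
    obtain ⟨α, β, hαβ⟩ := hcop
    have hz : z = aeval (uE K W) (α * (X - C ((2:K) ^ j))) z +
        aeval (uE K W) (β * ∏ k ∈ F', (X - C ((2:K) ^ k))) z := by
      have h0 := congrArg (fun P : K[X] => aeval (uE K W) P z) hαβ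
      simp only [map_add, map_one, LinearMap.add_apply, Module.End.one_apply] at h0
      exact h0.symm
    set z₂ := aeval (uE K W) (α * (X - C ((2:K) ^ j))) z with hz₂
    set z₁ := aeval (uE K W) (β * ∏ k ∈ F', (X - C ((2:K) ^ k))) z with hz₁
    -- facts about z₁
    have h1u : aeval (uE K W) (X - C ((2:K) ^ j)) z₁ = 0 := by
      rw [hz₁, ← Module.End.mul_apply, ← map_mul,
        show (X - C ((2:K) ^ j)) * (β * ∏ k ∈ F', (X - C ((2:K) ^ k))) =
          β * ((X - C ((2:K) ^ j)) * ∏ k ∈ F', (X - C ((2:K) ^ k))) by ring,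
        show (X - C ((2:K) ^ j)) * ∏ k ∈ F', (X - C ((2:K) ^ k)) =
          ∏ k ∈ insert j F', (X - C ((2:K) ^ k)) from
          (Finset.prod_insert (f := fun k => X - C ((2:K) ^ k)) hj).symm,
        map_mul, Module.End.mul_apply, hu, map_zero]
    have h1eig : uE K W z₁ = ((2:K) ^ j) • z₁ := by
      rw [aeval_X_sub_C_apply, sub_eq_zero] at h1u
      exact h1u
    have h1v : aeval (vE K W) (∏ k ∈ G, (X - C ((2:K) ^ k))) z₁ = 0 := by
      rw [hz₁]
      have hc := congrArg (fun g => g z)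
        (commute_aeval_uv (K := K) (W := W) (β * ∏ k ∈ F', (X - C ((2:K) ^ k)))
          (∏ k ∈ G, (X - C ((2:K) ^ k)))).eq
      simp only [Module.End.mul_apply] at hc
      rw [← hc, hv, map_zero]
    have h1kill : aeval (σE K W) (∏ m ∈ (insert j F') + G, (X - C ((2:K) ^ m))) z₁ = 0 := by
      have hA1 := lemA1 (K := K) (W := W) j G z₁ h1eig
      rw [h1v, smul_zero] at hA1
      have himg : (∏ k ∈ G, (X - C ((2:K) ^ (j + k)))) =
          ∏ m ∈ G.image (j + ·), (X - C ((2:K) ^ m)) := by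
        rw [Finset.prod_image]
        intro a _ b _ hab
        simp only at hab
        omega
      rw [himg] at hA1
      refine kill_dvd _ ?_ hA1
      refine Finset.prod_dvd_prod_of_subset _ _ _ ?_
      intro m hm
      simp only [Finset.mem_image] at hm
      obtain ⟨k, hk, rfl⟩ := hm
      exact Finset.mem_add.mpr ⟨j, Finset.mem_insert_self j F', k, hk, rfl⟩
    -- facts about z₂
    have h2u : aeval (uE K W) (∏ k ∈ F', (X - C ((2:K) ^ k))) z₂ = 0 := by
      rw [hz₂, ← Module.End.mul_apply, ← map_mul,
        show (∏ k ∈ F', (X - C ((2:K) ^ k))) * (α * (X - C ((2:K) ^ j))) =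
          α * ((X - C ((2:K) ^ j)) * ∏ k ∈ F', (X - C ((2:K) ^ k))) by ring,
        show (X - C ((2:K) ^ j)) * ∏ k ∈ F', (X - C ((2:K) ^ k)) =
          ∏ k ∈ insert j F', (X - C ((2:K) ^ k)) from
          (Finset.prod_insert (f := fun k => X - C ((2:K) ^ k)) hj).symm,
        map_mul, Module.End.mul_apply, hu, map_zero]
    have h2v : aeval (vE K W) (∏ k ∈ G, (X - C ((2:K) ^ k))) z₂ = 0 := by
      rw [hz₂]
      have hc := congrArg (fun g => g z)
        (commute_aeval_uv (K := K) (W := W) (α * (X - C ((2:K) ^ j)))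
          (∏ k ∈ G, (X - C ((2:K) ^ k)))).eq
      simp only [Module.End.mul_apply] at hc
      rw [← hc, hv, map_zero]
    have h2kill : aeval (σE K W) (∏ m ∈ (insert j F') + G, (X - C ((2:K) ^ m))) z₂ = 0 := by
      have := ih z₂ h2u h2v
      refine kill_dvd _ ?_ this
      refine Finset.prod_dvd_prod_of_subset _ _ _ ?_
      intro m hm
      rw [Finset.mem_add] at hm ⊢
      obtain ⟨a, ha, b, hb, rfl⟩ := hm
      exact ⟨a, Finset.mem_insert_of_mem ha, b, hb, rfl⟩
    rw [hz, map_add, h2kill, h1kill, add_zero]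

lemma sumset_Icc {p q : ℕ} (hp : 1 ≤ p) (hq : 1 ≤ q) :
    Finset.Icc 1 p + Finset.Icc 1 q = Finset.Icc 2 (p + q) := by
  ext m
  simp only [Finset.mem_add, Finset.mem_Icc]
  constructor
  · rintro ⟨a, ha, b, hb, rfl⟩
    omega
  · rintro ⟨h2, hpq⟩
    exact ⟨max 1 (m - q), by omega, m - max 1 (m - q), by omega, by omega⟩

lemma Mgr_killed (n : ℕ)
    (IH : ∀ m, 1 ≤ m → m < n → ∀ y ∈ gr K W m,
      aeval (sE K W) (∏ k ∈ Finset.Icc 1 m, (X - C ((2:K) ^ k))) y = 0) :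
    ∀ z ∈ Mgr K W n, aeval (σE K W) (∏ m ∈ Finset.Icc 2 n, (X - C ((2:K) ^ m))) z = 0 := by
  intro z hz
  have key : Mgr K W n ≤ LinearMap.ker
      (aeval (σE K W) (∏ m ∈ Finset.Icc 2 n, (X - C ((2:K) ^ m)))) := by
    refine iSup₂_le ?_
    intro p hp
    simp only [Finset.mem_Icc] at hp
    intro z' hz'
    rw [LinearMap.mem_ker]
    have hp1 : 1 ≤ p := hp.1
    have hpn : p + 1 ≤ n := by omega
    have hq1 : 1 ≤ n - p := by omega
    have hA := lemA (K := K) (W := W) (Finset.Icc 1 p) (Finset.Icc 1 (n - p)) z'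
      (kill_u (fun a ha => IH p hp1 (by omega) a ha) z' hz')
      (kill_v (fun b hb => IH (n - p) hq1 (by omega) b hb) z' hz')
    rw [sumset_Icc hp1 hq1, show p + (n - p) = n by omega] at hA
    exact hA
  exact key hz

lemma Dbar_aeval (P : K[X]) (x : T) :
    Dbar K W (aeval (sE K W) P x) = aeval (σE K W) P (Dbar K W x) := by
  induction P using Polynomial.induction_on' with
  | add p q hp hq =>
    simp only [map_add, LinearMap.add_apply, hp, hq]
  | monomial n c =>
    have hpow : ∀ m : ℕ, Dbar K W ((sE K W ^ m) x) = (σE K W ^ m) (Dbar K W x) := by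
      intro m
      induction m with
      | zero => simp
      | succ m ih =>
        rw [pow_succ', pow_succ', Module.End.mul_apply, Module.End.mul_apply,
          show (sE K W) ((sE K W ^ m) x) = shuffleOp K W ((sE K W ^ m) x) from rfl,
          Dbar_shuffle, ih]
        rfl
    rw [aeval_monomial, aeval_monomial, Module.End.mul_apply, Module.End.mul_apply,
      Module.algebraMap_end_apply, Module.algebraMap_end_apply, map_smul, hpow]

lemma aeval_sE_grade (n : ℕ) (P : K[X]) (x : T) (hx : x ∈ gr K W n) :
    aeval (sE K W) P x ∈ gr K W n := by
  induction P using Polynomial.induction_on' with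
  | add p q hp hq => rw [map_add, LinearMap.add_apply]; exact add_mem hp hq
  | monomial m c =>
    have hpow : ∀ k : ℕ, (sE K W ^ k) x ∈ gr K W n := by
      intro k
      induction k with
      | zero => simpa using hx
      | succ k ih =>
        rw [pow_succ', Module.End.mul_apply]
        exact shuffle_grade n _ ih
    rw [aeval_monomial, Module.End.mul_apply, Module.algebraMap_end_apply]
    exact Submodule.smul_mem _ _ (hpow m)

/-- The minimal polynomial identity: `∏ (s - 2^k) = 0` on `gr n`, `1 ≤ k ≤ n`. -/
theorem minpoly_thm : ∀ n, 1 ≤ n → ∀ x ∈ gr K W n,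
    aeval (sE K W) (∏ k ∈ Finset.Icc 1 n, (X - C ((2:K) ^ k))) x = 0 := by
  intro n
  induction n using Nat.strong_induction_on with
  | _ n IH =>
    intro hn x hx
    set z := aeval (sE K W) (∏ k ∈ Finset.Icc 2 n, (X - C ((2:K) ^ k))) x with hzdef
    have hzgr : z ∈ gr K W n := aeval_sE_grade n _ x hx
    have hzeps : algebraMapInv z = (0 : K) := eps_grade hn z hzgr
    have hDz : Dbar K W z = 0 := by
      rw [hzdef, Dbar_aeval]
      exact Mgr_killed n (fun m h1 h2 y hy => IH m h2 h1 y hy) _ (Dbar_grade n x hx)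
    have hprim : comul K W z = z ⊗ₜ[K] 1 + 1 ⊗ₜ[K] z := prim_of_Dbar_zero hzeps hDz
    have hsz : shuffleOp K W z = (2 : K) • z := isPrim_shuffle hprim
    have hins : Finset.Icc 1 n = insert 1 (Finset.Icc 2 n) := by
      ext m
      simp only [Finset.mem_Icc, Finset.mem_insert]
      omega
    rw [hins, Finset.prod_insert (by simp), map_mul, Module.End.mul_apply, ← hzdef,
      aeval_X_sub_C_apply, pow_one]
    rw [show (sE K W) z = shuffleOp K W z from rfl, hsz, sub_self]

/-- main step: a homogeneous `2`-eigenvector of `s` of positive degree is primitive. -/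
lemma prim_of_homog_eig {n : ℕ} (hn : 1 ≤ n) {x : T} (hx : x ∈ gr K W n)
    (hs : shuffleOp K W x = (2 : K) • x) :
    comul K W x = x ⊗ₜ[K] 1 + 1 ⊗ₜ[K] x := by
  have heig : σE K W (Dbar K W x) = (2 : K) • Dbar K W x := by
    have h1 : Dbar K W (shuffleOp K W x) = σE K W (Dbar K W x) := Dbar_shuffle x
    rw [hs, map_smul] at h1
    exact h1.symm
  have hkill : aeval (σE K W) (∏ m ∈ Finset.Icc 2 n, (X - C ((2:K) ^ m))) (Dbar K W x) = 0 :=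
    Mgr_killed n (fun m h1 h2 y hy => minpoly_thm m h1 y hy) _ (Dbar_grade n x hx)
  rw [aeval_eig _ heig] at hkill
  have hne : (∏ m ∈ Finset.Icc 2 n, (X - C ((2:K) ^ m))).eval 2 ≠ 0 := by
    rw [eval_prod]
    refine Finset.prod_ne_zero_iff.mpr ?_
    intro m hm
    simp only [Finset.mem_Icc] at hm
    simp only [eval_sub, eval_X, eval_C]
    intro hcontra
    rw [sub_eq_zero] at hcontra
    have : (2:K) ^ 1 = (2:K) ^ m := by rwa [pow_one]
    have := two_pow_inj (K := K) this
    omega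
  have hD0 : Dbar K W x = 0 := by
    by_contra hne0
    exact hne0 (by
      have := smul_eq_zero.mp hkill
      rcases this with h | h
      · exact absurd h hne
      · exact h)
  exact prim_of_Dbar_zero (eps_grade hn x hx) hD0

/-- a homogeneous `2`-eigenvector of positive degree lies in the free Lie algebra. -/
lemma mem_lieSpan_of_homog_eig {n : ℕ} (hn : 1 ≤ n) {x : T} (hx : x ∈ gr K W n)
    (hs : shuffleOp K W x = (2 : K) • x) : x ∈ LW K W := by
  have hprim := prim_of_homog_eig hn hx hs
  have hDD : DD K W x = (n : K) • x := by
    rw [DD_prim hprim, NN_grade n x hx]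
  have hnne : (n : K) ≠ 0 := Nat.cast_ne_zero.mpr (by omega)
  have : x = ((n : K)⁻¹) • DD K W x := by
    rw [hDD, smul_smul, inv_mul_cancel₀ hnne, one_smul]
  rw [this]
  exact Submodule.smul_mem (LW K W).toSubmodule _ (DD_mem_lieSpan x)


/-! ### Assembly via the grading decomposition -/

open DirectSum

lemma hard_direction {x : T} (hx : algebraMapInv x = (0 : K))
    (hs : shuffleOp K W x = (2 : K) • x) : x ∈ LW K W := by
  classical
  set 𝒜 : ℕ → Submodule K T := ((LinearMap.range (ι K : W →ₗ[K] T) ^ ·)) with h𝒜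
  have hgr : ∀ n, 𝒜 n = gr K W n := fun n => rfl
  set F := (DirectSum.decompose 𝒜 x).support with hF
  have hxsum : x = ∑ i ∈ F, ((DirectSum.decompose 𝒜 x i : T)) :=
    (DirectSum.sum_support_decompose 𝒜 x).symm
  -- the component projections
  set π : ℕ → (T →ₗ[K] T) := fun n =>
    (𝒜 n).subtype ∘ₗ (DirectSum.component K ℕ (fun i => 𝒜 i) n) ∘ₗ
      (DirectSum.decomposeLinearEquiv 𝒜).toLinearMap with hπ
  have hπ_apply : ∀ n (y : T), π n y = (DirectSum.decompose 𝒜 y n : T) := fun n y => rfl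
  have hπ_same : ∀ n (y : T), y ∈ gr K W n → π n y = y := by
    intro n y hy
    rw [hπ_apply]
    exact DirectSum.decompose_of_mem_same 𝒜 (by rw [hgr]; exact hy)
  have hπ_ne : ∀ n m (y : T), y ∈ gr K W m → m ≠ n → π n y = 0 := by
    intro n m y hy hmn
    rw [hπ_apply]
    have := DirectSum.decompose_of_mem_ne 𝒜 (show y ∈ 𝒜 m by rw [hgr]; exact hy) hmn
    rw [this]
  have hcomp_mem : ∀ n, ((DirectSum.decompose 𝒜 x n : T)) ∈ gr K W n := by
    intro n
    rw [← hgr]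
    exact (DirectSum.decompose 𝒜 x n).2
  -- each component is an eigenvector
  have key : ∀ n, shuffleOp K W ((DirectSum.decompose 𝒜 x n : T)) =
      (2 : K) • ((DirectSum.decompose 𝒜 x n : T)) := by
    intro n
    have h1 : π n (shuffleOp K W x) = (2 : K) • ((DirectSum.decompose 𝒜 x n : T)) := by
      rw [hs, map_smul, hπ_apply]
    have h2 : π n (shuffleOp K W x) = shuffleOp K W ((DirectSum.decompose 𝒜 x n : T)) := by
      conv_lhs => rw [hxsum]
      rw [map_sum, map_sum]
      rw [Finset.sum_eq_single n]
      · exact hπ_same n _ (shuffle_grade n _ (hcomp_mem n))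
      · intro i _ hin
        exact hπ_ne n i _ (shuffle_grade i _ (hcomp_mem i)) hin
      · intro hn
        have : ((DirectSum.decompose 𝒜 x n : T)) = 0 := by
          rw [DFinsupp.notMem_support_iff.mp hn, ZeroMemClass.coe_zero]
        rw [this, map_zero, map_zero]
    rw [← h2, h1]
  -- the degree-zero component vanishes
  have h0 : ((DirectSum.decompose 𝒜 x 0 : T)) = 0 := by
    have hx0 : algebraMapInv ((DirectSum.decompose 𝒜 x 0 : T)) = (0 : K) := by
      have : algebraMapInv x = ∑ i ∈ F, algebraMapInv ((DirectSum.decompose 𝒜 x i : T)) := by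
        conv_lhs => rw [hxsum]
        rw [map_sum]
      rw [hx] at this
      rcases Finset.decidableMem 0 F with h0F | h0F
      · -- 0 ∉ F
        rw [DFinsupp.notMem_support_iff.mp h0F, ZeroMemClass.coe_zero, map_zero]
      · have hsum : ∑ i ∈ F, algebraMapInv ((DirectSum.decompose 𝒜 x i : T)) =
            algebraMapInv ((DirectSum.decompose 𝒜 x 0 : T)) := by
          rw [Finset.sum_eq_single 0]
          · intro i _ hi0
            exact eps_grade (by omega) _ (hcomp_mem i)
          · intro hn
            rw [DFinsupp.notMem_support_iff.mp hn]
            simp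
        rw [hsum] at this
        exact this.symm
    have hmem := hcomp_mem 0
    rw [gr, pow_zero] at hmem
    obtain ⟨r, hr⟩ := Submodule.mem_one.mp hmem
    rw [← hr] at hx0 ⊢
    rw [show algebraMapInv (algebraMap K T r) = r by rw [AlgHom.commutes]; simp] at hx0
    rw [hx0, map_zero]
  -- conclude
  rw [hxsum]
  refine Submodule.sum_mem (LW K W).toSubmodule ?_
  intro i _
  rcases Nat.eq_zero_or_pos i with rfl | hi
  · rw [h0]; exact zero_mem _
  · exact mem_lieSpan_of_homog_eig hi (hcomp_mem i) (key i)

end Stmt6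

/-- an element of the augmentation ideal of the tensor algebra satisfies
`s x = 2x` iff it lies in the free Lie algebra on `W`, realized as the Lie subalgebra of
`T(W)` generated by `W`. -/
theorem stmt6 {K W : Type*} [Field K] [CharZero K] [AddCommGroup W] [Module K W]
    (x : TensorAlgebra K W) (hx : TensorAlgebra.algebraMapInv (M := W) x = 0) :
    shuffleOp K W x = (2 : K) • x ↔
      x ∈ LieSubalgebra.lieSpan K (TensorAlgebra K W)
            (Set.range (TensorAlgebra.ι K : W →ₗ[K] TensorAlgebra K W)) := by
  constructor
  · exact fun h => Stmt6.hard_direction hx h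
  · exact fun h => Stmt6.isPrim_shuffle (Stmt6.prim_of_mem_lieSpan h)
end

section
/- Let W be a vector space over a field K of characteristic zero and let s = μΔ be the modified shuffle operator on T(W) (with W primitive) and s̃ := 1 ⊗ s the operator on W ⊗ T(W) = ⊕_{i≥1} W^{⊗i}. Then under the natural identifications, s ∘ (1 − z) = (1 − z) ∘ s̃ on ⊕_{i≥1} W^{⊗i}, where z acts on W^{⊗n} by the cyclic permutation; equivalently, for x ∈ W and y ∈ W^{⊗n}, s([x, y]) = [x, s(y)], where [−,−] is the commutator in T(W). -/
open scoped TensorProduct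

section helpers

variable {K A : Type*} [CommRing K] [Ring A] [Algebra K A]

lemma mul'_left_one (a : A) (t : A ⊗[K] A) :
    LinearMap.mul' K A ((a ⊗ₜ[K] 1) * t) = a * LinearMap.mul' K A t := by
  induction t using TensorProduct.induction_on with
  | zero => simp
  | tmul b c => simp [Algebra.TensorProduct.tmul_mul_tmul, mul_assoc]
  | add u v hu hv => simp [mul_add, hu, hv]

lemma mul'_right_one (a : A) (t : A ⊗[K] A) :
    LinearMap.mul' K A (t * ((1 : A) ⊗ₜ[K] a)) = LinearMap.mul' K A t * a := by
  induction t using TensorProduct.induction_on with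
  | zero => simp
  | tmul b c => simp [Algebra.TensorProduct.tmul_mul_tmul, mul_assoc]
  | add u v hu hv => simp [add_mul, hu, hv]

lemma mul'_swap (a : A) (t : A ⊗[K] A) :
    LinearMap.mul' K A (((1 : A) ⊗ₜ[K] a) * t) =
      LinearMap.mul' K A (t * (a ⊗ₜ[K] (1 : A))) := by
  induction t using TensorProduct.induction_on with
  | zero => simp
  | tmul b c => simp [Algebra.TensorProduct.tmul_mul_tmul, mul_assoc]
  | add u v hu hv =>
      simp only [mul_add, add_mul, map_add, hu, hv]

end helpers

lemma comul_ι {K W : Type*} [CommRing K] [AddCommGroup W] [Module K W] (x : W) :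
    comul K W (TensorAlgebra.ι K x) =
      TensorAlgebra.ι K x ⊗ₜ[K] 1 + (1 : TensorAlgebra K W) ⊗ₜ[K] TensorAlgebra.ι K x := by
  simp only [comul, TensorAlgebra.lift_ι_apply, LinearMap.add_apply, LinearMap.comp_apply,
    AlgHom.toLinearMap_apply, Algebra.TensorProduct.includeLeft_apply,
    Algebra.TensorProduct.includeRight_apply]

/-- for `x ∈ W` and `y ∈ W^{⊗n}`, `s([x,y]) = [x, s(y)]`;
equivalently `s ∘ (1 - z) = (1 - z) ∘ s̃`. -/
theorem stmt15 {K W : Type*} [Field K] [CharZero K] [AddCommGroup W] [Module K W]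
    (n : ℕ) (x : W) (y : TensorAlgebra K W)
    (hy : y ∈ (LinearMap.range (TensorAlgebra.ι K : W →ₗ[K] TensorAlgebra K W)) ^ n) :
    shuffleOp K W (TensorAlgebra.ι K x * y - y * TensorAlgebra.ι K x)
      = TensorAlgebra.ι K x * shuffleOp K W y - shuffleOp K W y * TensorAlgebra.ι K x := by
  simp only [shuffleOp, LinearMap.comp_apply, AlgHom.toLinearMap_apply, map_sub, map_mul,
    comul_ι]
  rw [add_mul, mul_add, map_add, map_add, mul'_left_one, mul'_right_one, mul'_swap]
  abel
end
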